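/- arXiv:1905.12580 — 3 statements merged into one kernel-verified Lean document; each statement's English description precedes it below -/
import Mathlib

section
/- Let F = {q_1,...,q_k} be queries q_i : Z → {0,1} independent of an i.i.d. test set z_1,...,z_n drawn from D, and suppose M is an η similarity cover of F of size N_η. Then P(max_{1≤i≤k} |Ê_S[q_i] − E_D[q_i]| ≥ ε) ≤ 2N_η·exp(−nε²/2) + 2k·exp(−(nε/4)·log(1 + ε/(4(1−η)))) for any η ∈ [0,1). -/
open MeasureTheory

open Real ProbabilityTheory

open MeasureTheory Real ProbabilityTheory
open Real

/-- Hoeffding's lemma for Bernoulli mgf. -/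
lemma hoeff_scalar {p : ℝ} (hp : 0 ≤ p) (hp1 : p ≤ 1) (t : ℝ) :
    1 + p * (Real.exp t - 1) ≤ Real.exp (t ^ 2 / 8 + t * p) := by
  set den : ℝ → ℝ := fun s => 1 + p * (Real.exp s - 1) with hden_def
  have hden : ∀ s, 0 < den s := by
    intro s
    have h := exp_pos s
    simp only [hden_def]
    rcases eq_or_lt_of_le hp with hp0 | hp0
    · simp [← hp0]
    · nlinarith [mul_pos hp0 h]
  set ψ : ℝ → ℝ := fun s => s / 4 + p - p * Real.exp s / den s with hψ_def
  set φ : ℝ → ℝ := fun s => s ^ 2 / 8 + p * s - Real.log (den s) with hφ_def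
  have hden' : ∀ s, HasDerivAt den (p * Real.exp s) s := by
    intro s
    exact (((Real.hasDerivAt_exp s).sub_const 1).const_mul p).const_add 1
  have hφ' : ∀ s, HasDerivAt φ (ψ s) s := by
    intro s
    have h1 : HasDerivAt (fun u : ℝ => u ^ 2 / 8 + p * u) (s / 4 + p) s := by
      have := ((hasDerivAt_pow 2 s).div_const 8).add ((hasDerivAt_id s).const_mul p)
      exact this.congr_deriv (by norm_num; ring)
    have h2 : HasDerivAt (fun u => Real.log (den u)) (p * Real.exp s / den s) s :=
      (hden' s).log (hden s).ne'
    exact h1.sub h2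
  set ρ : ℝ → ℝ := fun s =>
    1 / 4 - (p * Real.exp s * den s - p * Real.exp s * (p * Real.exp s)) / den s ^ 2 with hρ_def
  have hψ' : ∀ s, HasDerivAt ψ (ρ s) s := by
    intro s
    have h1 : HasDerivAt (fun u : ℝ => u / 4 + p) (1 / 4) s := by
      simpa using ((hasDerivAt_id s).div_const 4).add_const p
    have h2 : HasDerivAt (fun u => p * Real.exp u / den u)
        ((p * Real.exp s * den s - p * Real.exp s * (p * Real.exp s)) / den s ^ 2) s :=
      ((Real.hasDerivAt_exp s).const_mul p).div (hden' s) (hden s).ne'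
    exact h1.sub h2
  have hρ : ∀ s, 0 ≤ ρ s := by
    intro s
    have hd := hden s
    have he := exp_pos s
    have hdval : den s = 1 - p + p * Real.exp s := by simp [hden_def]; ring
    have key : p * Real.exp s * den s - p * Real.exp s * (p * Real.exp s) ≤ 1 / 4 * den s ^ 2 := by
      nlinarith [sq_nonneg (1 - p - p * Real.exp s)]
    have hd2 : (0:ℝ) < den s ^ 2 := by positivity
    simp only [hρ_def, sub_nonneg]
    rw [div_le_iff₀ hd2]
    linarith
  have hψmono : Monotone ψ :=
    monotone_of_deriv_nonneg (fun s => (hψ' s).differentiableAt)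
      (fun s => by rw [(hψ' s).deriv]; exact hρ s)
  have hψ0 : ψ 0 = 0 := by
    simp [hψ_def, hden_def]
  have hφ0 : φ 0 = 0 := by
    simp [hφ_def, hden_def]
  have hφdiff : Differentiable ℝ φ := fun s => (hφ' s).differentiableAt
  have hφt : 0 ≤ φ t := by
    rcases le_or_gt 0 t with ht | ht
    · have hmono : MonotoneOn φ (Set.Ici (0:ℝ)) := by
        refine monotoneOn_of_deriv_nonneg (convex_Ici 0) hφdiff.continuous.continuousOn
          hφdiff.differentiableOn ?_
        intro x hx
        rw [interior_Ici] at hx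
        rw [(hφ' x).deriv]
        have : ψ 0 ≤ ψ x := hψmono (le_of_lt hx)
        linarith [hψ0 ▸ this]
      have := hmono (Set.self_mem_Ici) (Set.mem_Ici.2 ht) ht
      linarith [hφ0 ▸ this]
    · have hmono : AntitoneOn φ (Set.Iic (0:ℝ)) := by
        refine antitoneOn_of_deriv_nonpos (convex_Iic 0) hφdiff.continuous.continuousOn
          hφdiff.differentiableOn ?_
        intro x hx
        rw [interior_Iic] at hx
        rw [(hφ' x).deriv]
        have : ψ x ≤ ψ 0 := hψmono (le_of_lt hx)
        linarith [hψ0 ▸ this]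
      have := hmono (Set.mem_Iic.2 ht.le) (Set.self_mem_Iic) ht.le
      linarith [hφ0 ▸ this]
  have hlog : Real.log (den t) ≤ t ^ 2 / 8 + p * t := by
    simp only [hφ_def] at hφt
    linarith
  calc den t = Real.exp (Real.log (den t)) := (Real.exp_log (hden t)).symm
    _ ≤ Real.exp (t ^ 2 / 8 + t * p) := by
        apply exp_le_exp.2
        linarith [hlog]
open MeasureTheory Real ProbabilityTheory

lemma integrable_of_bdd {Z : Type*} [MeasurableSpace Z] {D : Measure Z} [IsFiniteMeasure D]
    {f : Z → ℝ} (hf : Measurable f) {C : ℝ} (hb : ∀ z, |f z| ≤ C) : Integrable f D :=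
  (integrable_const C).mono' hf.aestronglyMeasurable
    (Filter.Eventually.of_forall (by simpa using hb))

lemma chernoff_pi {Z : Type*} [MeasurableSpace Z] (D : Measure Z) [IsProbabilityMeasure D]
    (n : ℕ) (f : Z → ℝ) (hf : Measurable f) (C : ℝ) (hb : ∀ z, |f z| ≤ C)
    {t : ℝ} (ht : 0 ≤ t) (c : ℝ) :
    ((Measure.pi fun _ : Fin n => D) {ω | c ≤ ∑ j, f (ω j)}).toReal
      ≤ Real.exp (-t * c) * (∫ z, Real.exp (t * f z) ∂D) ^ n := by
  letI : MeasureSpace Z := ⟨D⟩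
  have hXmeas : Measurable (fun ω : Fin n → Z => ∑ j, f (ω j)) :=
    Finset.measurable_sum _ fun j _ => hf.comp (measurable_pi_apply j)
  have h_int : Integrable (fun ω : Fin n → Z => Real.exp (t * ∑ j, f (ω j)))
      (Measure.pi fun _ : Fin n => D) := by
    refine integrable_of_bdd (measurable_const.mul hXmeas).exp (C := Real.exp (t * (n * C))) ?_
    intro ω
    rw [abs_of_pos (exp_pos _)]
    apply exp_le_exp.2
    have habs : |∑ j, f (ω j)| ≤ n * C := by
      calc |∑ j, f (ω j)| ≤ ∑ j, |f (ω j)| := Finset.abs_sum_le_sum_abs _ _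
        _ ≤ ∑ _j : Fin n, C := Finset.sum_le_sum fun j _ => hb (ω j)
        _ = n * C := by simp [mul_comm]
    exact mul_le_mul_of_nonneg_left (le_of_abs_le habs) ht
  have hch : ((Measure.pi fun _ : Fin n => D) {ω | c ≤ ∑ j, f (ω j)}).toReal
      ≤ Real.exp (-t * c) *
        mgf (fun ω : Fin n → Z => ∑ j, f (ω j)) (Measure.pi fun _ : Fin n => D) t :=
    measure_ge_le_exp_mul_mgf c ht h_int
  have hmgf : mgf (fun ω : Fin n → Z => ∑ j, f (ω j)) (Measure.pi fun _ : Fin n => D) t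
      = (∫ z, Real.exp (t * f z) ∂D) ^ n := by
    unfold mgf
    have h1 : ∀ ω : Fin n → Z, Real.exp (t * ∑ j, f (ω j)) = ∏ j, Real.exp (t * f (ω j)) := by
      intro ω
      rw [← Real.exp_sum, Finset.mul_sum]
    simp_rw [h1]
    have h2 := MeasureTheory.integral_fintype_prod_eq_pow (𝕜 := ℝ) (ι := Fin n)
      (fun x : Z => Real.exp (t * f x)) (μ := D)
    simpa using h2
  rw [hmgf] at hch
  exact hch

lemma bern_tail {Z : Type*} [MeasurableSpace Z] (D : Measure Z) [IsProbabilityMeasure D]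
    (n : ℕ) (g : Z → ℝ) (hg : Measurable g) (hval : ∀ z, g z = 0 ∨ g z = 1)
    {ε : ℝ} (hε : 0 < ε) :
    ((Measure.pi fun _ : Fin n => D)
        {ω | n * (∫ z, g z ∂D) + n * (ε / 2) ≤ ∑ j, g (ω j)}).toReal
      ≤ Real.exp (-(n * ε ^ 2 / 2)) := by
  have hb : ∀ z, |g z| ≤ 1 := by
    intro z; rcases hval z with h | h <;> simp [h]
  have hgi : Integrable g D := integrable_of_bdd hg hb
  have ht : (0:ℝ) ≤ 2 * ε := by linarith
  set p : ℝ := ∫ z, g z ∂D with hp_def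
  have hp0 : 0 ≤ p := integral_nonneg fun z => by rcases hval z with h | h <;> simp [h]
  have hp1 : p ≤ 1 := by
    calc p ≤ ∫ _z, (1:ℝ) ∂D := by
          refine integral_mono hgi (integrable_const 1) fun z => ?_
          rcases hval z with h | h <;> simp [h]
      _ = 1 := by simp
  have hint : (∫ z, Real.exp (2 * ε * g z) ∂D) = 1 + p * (Real.exp (2 * ε) - 1) := by
    have hpt : ∀ z, Real.exp (2 * ε * g z) = 1 + (Real.exp (2 * ε) - 1) * g z := by
      intro z; rcases hval z with h | h <;> simp [h]
    rw [integral_congr_ae (Filter.Eventually.of_forall hpt),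
      integral_add (integrable_const 1) (hgi.const_mul _), integral_const]
    simp [hp_def, integral_const_mul]
    ring
  refine (chernoff_pi D n g hg 1 hb ht _).trans ?_
  rw [hint]
  have hscal := hoeff_scalar hp0 hp1 (2 * ε)
  have hnn : (0:ℝ) ≤ 1 + p * (Real.exp (2 * ε) - 1) := by
    rw [← hint]; exact integral_nonneg fun z => (exp_pos _).le
  calc Real.exp (-(2 * ε) * (n * p + n * (ε / 2))) * (1 + p * (Real.exp (2 * ε) - 1)) ^ n
      ≤ Real.exp (-(2 * ε) * (n * p + n * (ε / 2))) *
          Real.exp ((2 * ε) ^ 2 / 8 + 2 * ε * p) ^ n := by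
        have hpow : (1 + p * (Real.exp (2 * ε) - 1)) ^ n
            ≤ Real.exp ((2 * ε) ^ 2 / 8 + 2 * ε * p) ^ n := pow_le_pow_left₀ hnn hscal n
        exact mul_le_mul_of_nonneg_left hpow (exp_pos _).le
    _ = Real.exp (-(n * ε ^ 2 / 2)) := by
        rw [← Real.exp_nat_mul, ← Real.exp_add]
        congr 1
        ring

lemma diff_tail {Z : Type*} [MeasurableSpace Z] (D : Measure Z) [IsProbabilityMeasure D]
    (n : ℕ) (f : Z → ℝ) (hf : Measurable f) (hval : ∀ z, f z = -1 ∨ f z = 0 ∨ f z = 1)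
    {β ε : ℝ} (hβ : 0 < β) (hε : 0 < ε) (habs : (∫ z, |f z| ∂D) ≤ β) :
    ((Measure.pi fun _ : Fin n => D)
        {ω | n * (∫ z, f z ∂D) + n * (ε / 2) ≤ ∑ j, f (ω j)}).toReal
      ≤ Real.exp (-(n * ε / 4) * Real.log (1 + ε / (4 * β))) := by
  have hb : ∀ z, |f z| ≤ 1 := by
    intro z; rcases hval z with h | h | h <;> simp [h]
  have hfi : Integrable f D := integrable_of_bdd hf hb
  have hfa : Integrable (fun z => |f z|) D := hfi.abs
  have hu : (0:ℝ) < ε / (4 * β) := by positivity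
  set t : ℝ := Real.log (1 + ε / (4 * β)) with ht_def
  have ht0 : 0 < t := Real.log_pos (by linarith)
  have het : Real.exp t = 1 + ε / (4 * β) := Real.exp_log (by linarith)
  set c : ℝ := Real.exp t - 1 - t with hc_def
  have hc0 : 0 ≤ c := by
    have := Real.add_one_le_exp t
    simp only [hc_def]
    linarith
  set p : ℝ := ∫ z, f z ∂D with hp_def
  -- pointwise mgf bound
  have hpt : ∀ z, Real.exp (t * f z) ≤ 1 + t * f z + c * |f z| := by
    intro z
    rcases hval z with h | h | h
    · have hs : t ≤ Real.sinh t := Real.self_le_sinh_iff.2 ht0.le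
      rw [Real.sinh_eq] at hs
      simp only [h]
      rw [mul_neg_one, abs_neg, abs_one]
      simp only [hc_def]
      linarith
    · simp [h]
    · simp only [h, mul_one, abs_one, hc_def]
      linarith
  have hintle : (∫ z, Real.exp (t * f z) ∂D) ≤ 1 + t * p + c * β := by
    have h1 : Integrable (fun z => Real.exp (t * f z)) D := by
      refine integrable_of_bdd (measurable_const.mul hf).exp (C := Real.exp t) ?_
      intro z
      rw [abs_of_pos (exp_pos _)]
      apply exp_le_exp.2
      nlinarith [hb z, abs_le.1 (hb z)]
    have hA : Integrable (fun z => 1 + t * f z) D := by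
      simpa using (integrable_const (1:ℝ)).add (hfi.const_mul t)
    have h2 : Integrable (fun z => 1 + t * f z + c * |f z|) D := by
      exact hA.add (hfa.const_mul c)
    calc (∫ z, Real.exp (t * f z) ∂D) ≤ ∫ z, (1 + t * f z + c * |f z|) ∂D :=
          integral_mono h1 h2 hpt
      _ = 1 + t * p + c * (∫ z, |f z| ∂D) := by
          rw [integral_add hA (hfa.const_mul c),
            integral_add (integrable_const 1) (hfi.const_mul t), integral_const]
          simp [hp_def, integral_const_mul]
      _ ≤ 1 + t * p + c * β := by nlinarith
  have hint_exp : (∫ z, Real.exp (t * f z) ∂D) ≤ Real.exp (t * p + c * β) := by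
    refine hintle.trans ?_
    have := Real.add_one_le_exp (t * p + c * β)
    linarith
  refine (chernoff_pi D n f hf 1 hb ht0.le _).trans ?_
  have hnn : (0:ℝ) ≤ ∫ z, Real.exp (t * f z) ∂D := integral_nonneg fun z => (exp_pos _).le
  have hstep : Real.exp (-t * (n * p + n * (ε / 2))) * (∫ z, Real.exp (t * f z) ∂D) ^ n
      ≤ Real.exp (-t * (n * p + n * (ε / 2))) * Real.exp (t * p + c * β) ^ n :=
    mul_le_mul_of_nonneg_left (pow_le_pow_left₀ hnn hint_exp n) (exp_pos _).le
  refine hstep.trans ?_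
  rw [← Real.exp_nat_mul, ← Real.exp_add]
  apply exp_le_exp.2
  -- exponent: -t*(n*p + n*ε/2) + n*(t*p + c*β) = n*(c*β - t*ε/2) ≤ -(n*ε/4)*t
  have hcβ : c * β = ε / 4 - t * β := by
    simp only [hc_def]
    rw [het]
    field_simp
    ring
  -- key: ε/4 ≤ t * (β + ε/4)
  have hkey : ε / 4 ≤ t * (β + ε / 4) := by
    have hlog : 1 - (1 + ε / (4 * β))⁻¹ ≤ t := Real.one_sub_inv_le_log_of_pos (by linarith)
    have h1u : (0:ℝ) < 1 + ε / (4 * β) := by linarith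
    have heq : (1 - (1 + ε / (4 * β))⁻¹) * (β + ε / 4) = ε / 4 := by
      field_simp
      ring
    calc ε / 4 = (1 - (1 + ε / (4 * β))⁻¹) * (β + ε / 4) := heq.symm
      _ ≤ t * (β + ε / 4) := by
          apply mul_le_mul_of_nonneg_right hlog
          linarith
  have hn0 : (0:ℝ) ≤ (n:ℝ) := Nat.cast_nonneg n
  nlinarith [mul_le_mul_of_nonneg_left hkey hn0, hcβ]

/-- Integral of disagreement indicator bounded by `1 - η`. -/
lemma abs_diff_integral_le {Z : Type*} [MeasurableSpace Z] (D : Measure Z)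
    [IsProbabilityMeasure D] (a b : Z → ℝ) (ha : Measurable a) (hb : Measurable b)
    (hva : ∀ z, a z = 0 ∨ a z = 1) (hvb : ∀ z, b z = 0 ∨ b z = 1)
    {η : ℝ} (hag : η ≤ (D {z | b z = a z}).toReal) :
    (∫ z, |a z - b z| ∂D) ≤ 1 - η := by
  have hsmeas : MeasurableSet {z | b z = a z} := by
    have h : {z | b z = a z} = (fun z => b z - a z) ⁻¹' {0} := by
      ext z; simp [sub_eq_zero]
    rw [h]
    exact (hb.sub ha) (measurableSet_singleton 0)
  have hind : (fun z => |a z - b z|) = Set.indicator {z | b z = a z}ᶜ (fun _ => (1:ℝ)) := by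
    funext z
    by_cases h : b z = a z
    · rw [Set.indicator_of_notMem (by simpa using h), h]
      simp
    · rw [Set.indicator_of_mem (by simpa using h)]
      rcases hva z with h1 | h1 <;> rcases hvb z with h2 | h2 <;>
        simp_all [h1, h2]
  rw [hind, integral_indicator_const (1:ℝ) hsmeas.compl, smul_eq_mul, mul_one]
  have hadd : (D {z | b z = a z}).toReal + (D {z | b z = a z}ᶜ).toReal = 1 := by
    rw [← ENNReal.toReal_add (measure_ne_top _ _) (measure_ne_top _ _),
      measure_add_measure_compl hsmeas]
    simp
  rw [measureReal_def]
  linarith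

/-- Theorem 1, tail bound: similarity covers improve the union bound for
non-adaptively chosen {0,1}-valued queries evaluated on an i.i.d. test set. -/
theorem stmt_10 {Z : Type*} [MeasurableSpace Z] (D : Measure Z) [IsProbabilityMeasure D]
    (n k : ℕ) (hn : 0 < n) (hk : 0 < k)
    (q : Fin k → Z → ℝ) (hqmeas : ∀ i, Measurable (q i))
    (hqval : ∀ i z, q i z = 0 ∨ q i z = 1)
    (η ε : ℝ) (hη0 : 0 ≤ η) (hη1 : η < 1) (hε : 0 < ε)
    (M : Finset (Z → ℝ)) (hMmeas : ∀ m ∈ M, Measurable m)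
    (hMval : ∀ m ∈ M, ∀ z, m z = 0 ∨ m z = 1)
    (hcover : ∀ i : Fin k, ∃ q' ∈ M, ∃ q'' ∈ M,
      (∫ z, q' z ∂D) ≤ (∫ z, q i z ∂D) ∧ (∫ z, q i z ∂D) ≤ (∫ z, q'' z ∂D) ∧
      η ≤ (D {z | q' z = q i z}).toReal ∧ η ≤ (D {z | q'' z = q i z}).toReal) :
    ((Measure.pi fun _ : Fin n => D)
      {ω | ∃ i : Fin k, |(1 / n : ℝ) * ∑ j, q i (ω j) - ∫ z, q i z ∂D| ≥ ε}).toReal ≤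
      2 * M.card * Real.exp (-(n * ε ^ 2 / 2)) +
        2 * k * Real.exp (-(n * ε / 4) * Real.log (1 + ε / (4 * (1 - η)))) := by
  classical
  choose g' hg'M g'' hg''M hle hge hag' hag'' using hcover
  set μ := (Measure.pi fun _ : Fin n => D) with hμ_def
  set T : (Z → ℝ) → Set (Fin n → Z) :=
    fun f => {ω | n * (∫ z, f z ∂D) + n * (ε / 2) ≤ ∑ j, f (ω j)} with hT_def
  have hn' : (0:ℝ) < n := by exact_mod_cast hn
  have hβ : (0:ℝ) < 1 - η := by linarith
  have hq_int : ∀ i, Integrable (q i) D := fun i =>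
    integrable_of_bdd (hqmeas i) (C := 1) (fun z => by rcases hqval i z with h | h <;> simp [h])
  have hm_int : ∀ m ∈ M, Integrable m D := fun m hm =>
    integrable_of_bdd (hMmeas m hm) (C := 1)
      (fun z => by rcases hMval m hm z with h | h <;> simp [h])
  -- the inclusion
  have hsub : {ω | ∃ i : Fin k, |(1 / n : ℝ) * ∑ j, q i (ω j) - ∫ z, q i z ∂D| ≥ ε} ⊆
      (⋃ m ∈ M, (T m ∪ T (fun z => 1 - m z))) ∪
        (⋃ i : Fin k, (T (fun z => q i z - g'' i z) ∪ T (fun z => g' i z - q i z))) := by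
    rintro ω ⟨i, hi⟩
    have hup_or : ε ≤ (1 / n : ℝ) * ∑ j, q i (ω j) - ∫ z, q i z ∂D ∨
        ε ≤ -((1 / n : ℝ) * ∑ j, q i (ω j) - ∫ z, q i z ∂D) := le_abs.1 hi
    rcases hup_or with hup | hdn
    · -- upper deviation; use g'' i
      have hS : (n:ℝ) * (∫ z, q i z ∂D) + n * ε ≤ ∑ j, q i (ω j) := by
        have h2 := mul_le_mul_of_nonneg_left hup hn'.le
        have h3 : (n:ℝ) * ((1 / n : ℝ) * ∑ j, q i (ω j)) = ∑ j, q i (ω j) := by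
          field_simp
        rw [mul_sub, h3] at h2
        linarith
      have hWint : (∫ z, (q i z - g'' i z) ∂D)
          = (∫ z, q i z ∂D) - ∫ z, g'' i z ∂D :=
        integral_sub (hq_int i) (hm_int _ (hg''M i))
      have hWsum : (∑ j, (q i (ω j) - g'' i (ω j)))
          = (∑ j, q i (ω j)) - ∑ j, g'' i (ω j) := Finset.sum_sub_distrib _ _
      by_cases hY : ω ∈ T (g'' i)
      · exact Or.inl (Set.mem_biUnion (hg''M i) (Or.inl hY))
      · refine Or.inr (Set.mem_iUnion.2 ⟨i, Or.inl ?_⟩)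
        simp only [hT_def, Set.mem_setOf_eq, not_le] at hY ⊢
        rw [hWint, hWsum]
        linarith
    · -- lower deviation; use g' i
      have hS : (∑ j, q i (ω j)) ≤ (n:ℝ) * (∫ z, q i z ∂D) - n * ε := by
        have h2 := mul_le_mul_of_nonneg_left hdn hn'.le
        have h3 : (n:ℝ) * ((1 / n : ℝ) * ∑ j, q i (ω j)) = ∑ j, q i (ω j) := by
          field_simp
        rw [mul_neg, mul_sub, h3] at h2
        linarith
      have hWint : (∫ z, (g' i z - q i z) ∂D)
          = (∫ z, g' i z ∂D) - ∫ z, q i z ∂D :=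
        integral_sub (hm_int _ (hg'M i)) (hq_int i)
      have hWsum : (∑ j, (g' i (ω j) - q i (ω j)))
          = (∑ j, g' i (ω j)) - ∑ j, q i (ω j) := Finset.sum_sub_distrib _ _
      by_cases hW : ω ∈ T (fun z => g' i z - q i z)
      · exact Or.inr (Set.mem_iUnion.2 ⟨i, Or.inr hW⟩)
      · refine Or.inl (Set.mem_biUnion (hg'M i) (Or.inr ?_))
        simp only [hT_def, Set.mem_setOf_eq, not_le] at hW ⊢
        have hYmint : (∫ z, (1 - g' i z) ∂D) = 1 - ∫ z, g' i z ∂D := by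
          rw [integral_sub (integrable_const 1) (hm_int _ (hg'M i)), integral_const]
          simp
        have hYmsum : (∑ j, (1 - g' i (ω j))) = (n:ℝ) - ∑ j, g' i (ω j) := by
          rw [Finset.sum_sub_distrib, Finset.sum_const, Finset.card_univ]
          simp
        rw [hYmint, hYmsum]
        rw [hWint, hWsum] at hW
        linarith
  -- measure bookkeeping
  have h1 : μ {ω | ∃ i : Fin k, |(1 / n : ℝ) * ∑ j, q i (ω j) - ∫ z, q i z ∂D| ≥ ε}
      ≤ (∑ m ∈ M, (μ (T m) + μ (T (fun z => 1 - m z)))) +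
        ∑ i : Fin k, (μ (T (fun z => q i z - g'' i z)) + μ (T (fun z => g' i z - q i z))) := by
    refine (measure_mono hsub).trans ((measure_union_le _ _).trans (add_le_add ?_ ?_))
    · refine (measure_biUnion_finset_le M _).trans ?_
      exact Finset.sum_le_sum fun m _ => measure_union_le _ _
    · refine (measure_iUnion_le _).trans ?_
      rw [tsum_fintype]
      exact Finset.sum_le_sum fun i _ => measure_union_le _ _
  have hfin1 : (∑ m ∈ M, (μ (T m) + μ (T (fun z => 1 - m z)))) ≠ ⊤ :=
    ENNReal.sum_ne_top.2 fun m _ => ENNReal.add_ne_top.2 ⟨measure_ne_top _ _, measure_ne_top _ _⟩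
  have hfin2 : (∑ i : Fin k, (μ (T (fun z => q i z - g'' i z)) +
      μ (T (fun z => g' i z - q i z)))) ≠ ⊤ :=
    ENNReal.sum_ne_top.2 fun i _ => ENNReal.add_ne_top.2 ⟨measure_ne_top _ _, measure_ne_top _ _⟩
  have h2 := ENNReal.toReal_mono (ENNReal.add_ne_top.2 ⟨hfin1, hfin2⟩) h1
  rw [ENNReal.toReal_add hfin1 hfin2, ENNReal.toReal_sum (fun m _ => ENNReal.add_ne_top.2
      ⟨measure_ne_top _ _, measure_ne_top _ _⟩),
    ENNReal.toReal_sum (fun i _ => ENNReal.add_ne_top.2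
      ⟨measure_ne_top _ _, measure_ne_top _ _⟩)] at h2
  refine h2.trans ?_
  -- per-event bounds
  have hboundM : ∀ m ∈ M,
      (μ (T m) + μ (T (fun z => 1 - m z))).toReal ≤ 2 * Real.exp (-(n * ε ^ 2 / 2)) := by
    intro m hm
    rw [ENNReal.toReal_add (measure_ne_top _ _) (measure_ne_top _ _)]
    have hb1 := bern_tail D n m (hMmeas m hm) (hMval m hm) hε
    have hb2 := bern_tail D n (fun z => 1 - m z) (measurable_const.sub (hMmeas m hm))
      (fun z => by rcases hMval m hm z with h | h <;> simp [h]) hε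
    simp only [hT_def]
    linarith
  have hboundK : ∀ i : Fin k,
      (μ (T (fun z => q i z - g'' i z)) + μ (T (fun z => g' i z - q i z))).toReal
        ≤ 2 * Real.exp (-(n * ε / 4) * Real.log (1 + ε / (4 * (1 - η)))) := by
    intro i
    rw [ENNReal.toReal_add (measure_ne_top _ _) (measure_ne_top _ _)]
    have hd1 := diff_tail D n (fun z => q i z - g'' i z)
      ((hqmeas i).sub (hMmeas _ (hg''M i)))
      (fun z => by rcases hqval i z with h1 | h1 <;>
        rcases hMval _ (hg''M i) z with h2 | h2 <;> simp [h1, h2])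
      hβ hε
      (abs_diff_integral_le D (q i) (g'' i) (hqmeas i) (hMmeas _ (hg''M i))
        (hqval i) (hMval _ (hg''M i)) (hag'' i))
    have habs' : (∫ z, |g' i z - q i z| ∂D) ≤ 1 - η := by
      have h := abs_diff_integral_le D (q i) (g' i) (hqmeas i) (hMmeas _ (hg'M i))
        (hqval i) (hMval _ (hg'M i)) (hag' i)
      simpa [abs_sub_comm] using h
    have hd2 := diff_tail D n (fun z => g' i z - q i z)
      ((hMmeas _ (hg'M i)).sub (hqmeas i))
      (fun z => by rcases hqval i z with h1 | h1 <;>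
        rcases hMval _ (hg'M i) z with h2 | h2 <;> simp [h1, h2])
      hβ hε habs'
    simp only [hT_def]
    linarith
  calc (∑ m ∈ M, (μ (T m) + μ (T (fun z => 1 - m z))).toReal) +
        ∑ i : Fin k, (μ (T (fun z => q i z - g'' i z)) +
          μ (T (fun z => g' i z - q i z))).toReal
      ≤ (∑ _m ∈ M, 2 * Real.exp (-(n * ε ^ 2 / 2))) +
        ∑ _i : Fin k, 2 * Real.exp (-(n * ε / 4) * Real.log (1 + ε / (4 * (1 - η)))) :=
        add_le_add (Finset.sum_le_sum hboundM) (Finset.sum_le_sum fun i _ => hboundK i)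
    _ = 2 * M.card * Real.exp (-(n * ε ^ 2 / 2)) +
        2 * k * Real.exp (-(n * ε / 4) * Real.log (1 + ε / (4 * (1 - η)))) := by
        rw [Finset.sum_const, Finset.sum_const, Finset.card_univ, Fintype.card_fin]
        push_cast
        ring
end

section
/- Let q_1, ..., q_k be a collection of queries adaptively chosen by a deterministic analyst from a set F of at most (n+1)^{k−1} possible queries, with ε = √(4(k^{1−α}·log(n+1) + log(2/δ))/n) and η = 1 − ε/(4(e^{εk^α} − 1)) for some α ∈ [0,1]. If F admits an η similarity cover of size at most (n+1)^{k^{1−α}}, then with probability at least 1 − δ, max_{1≤i≤k} |Ê_S[q_i] − E_D[q_i]| ≤ ε. -/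
set_option maxHeartbeats 1000000

open MeasureTheory
open scoped ENNReal


section Helpers

/-- If `g 0 = 0` and `g` has nonnegative derivative on `[0,∞)`, then `g ≥ 0` there. -/
lemma adp_nonneg_of_deriv (g g' : ℝ → ℝ) (hder : ∀ t, 0 ≤ t → HasDerivAt g (g' t) t)
    (h0 : g 0 = 0) (hpos : ∀ t, 0 ≤ t → 0 ≤ g' t) {t : ℝ} (ht : 0 ≤ t) : 0 ≤ g t := by
  have mono : MonotoneOn g (Set.Ici (0:ℝ)) := by
    apply monotoneOn_of_deriv_nonneg (convex_Ici 0)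
    · exact fun x hx => (hder x hx).continuousAt.continuousWithinAt
    · intro x hx
      rw [interior_Ici] at hx
      exact (hder x hx.le).differentiableAt.differentiableWithinAt
    · intro x hx
      rw [interior_Ici] at hx
      rw [(hder x hx.le).deriv]
      exact hpos x hx.le
  have := mono (Set.self_mem_Ici) (Set.mem_Ici.2 ht) ht
  linarith [h0 ▸ this]

lemma adp_hoeffding_core {m : ℝ} (h0 : 0 ≤ m) (h1 : m ≤ 1) {t : ℝ} (ht : 0 ≤ t) :
    (1 - m + m * Real.exp t) * Real.exp (-(t * m)) ≤ Real.exp (t ^ 2 / 8) := by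
  have hd : ∀ τ : ℝ, 0 < 1 - m + m * Real.exp τ := by
    intro τ
    rcases lt_or_eq_of_le h1 with h | h
    · nlinarith [Real.exp_pos τ]
    · nlinarith [Real.exp_pos τ]
  set f : ℝ → ℝ := fun τ => Real.log (1 - m + m * Real.exp τ) - τ * m with hf
  have hder1 : ∀ τ : ℝ, HasDerivAt f (m * Real.exp τ / (1 - m + m * Real.exp τ) - m) τ := by
    intro τ
    have h1' : HasDerivAt (fun τ : ℝ => 1 - m + m * Real.exp τ) (m * Real.exp τ) τ := by
      simpa using ((Real.hasDerivAt_exp τ).const_mul m).const_add (1 - m)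
    have h2' : HasDerivAt (fun τ : ℝ => τ * m) m τ := by
      simpa using (hasDerivAt_id τ).mul_const m
    exact (h1'.log (hd τ).ne').sub h2'
  set g1 : ℝ → ℝ := fun τ => τ / 4 - (m * Real.exp τ / (1 - m + m * Real.exp τ) - m) with hg1
  have hder2 : ∀ τ : ℝ, HasDerivAt g1
      (1 / 4 - m * Real.exp τ * (1 - m) / (1 - m + m * Real.exp τ) ^ 2) τ := by
    intro τ
    have hnum : HasDerivAt (fun τ : ℝ => m * Real.exp τ) (m * Real.exp τ) τ :=
      (Real.hasDerivAt_exp τ).const_mul m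
    have hden : HasDerivAt (fun τ : ℝ => 1 - m + m * Real.exp τ) (m * Real.exp τ) τ := by
      simpa using ((Real.hasDerivAt_exp τ).const_mul m).const_add (1 - m)
    have hq := hnum.div hden (hd τ).ne'
    have : HasDerivAt g1 (1 / 4 - ((m * Real.exp τ * (1 - m + m * Real.exp τ) -
        m * Real.exp τ * (m * Real.exp τ)) / (1 - m + m * Real.exp τ) ^ 2 - 0)) τ := by
      exact ((hasDerivAt_id τ).div_const 4).sub (hq.sub (hasDerivAt_const τ m))
    convert this using 1
    field_simp
    ring
  have hg1nn : ∀ τ, 0 ≤ τ → 0 ≤ g1 τ := by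
    intro τ hτ
    apply adp_nonneg_of_deriv g1 _ (fun x _ => hder2 x) _ _ hτ
    · simp [hg1]
    · intro x _
      have hdx := hd x
      have hsq : 0 < (1 - m + m * Real.exp x) ^ 2 := by positivity
      rw [sub_nonneg, div_le_iff₀ hsq]
      nlinarith [sq_nonneg (1 - m + m * Real.exp x - 2 * (m * Real.exp x) * (1 - m) * 2),
        sq_nonneg (1 - m - m * Real.exp x), Real.exp_pos x, mul_nonneg h0 (Real.exp_pos x).le]
  have hfle : f t ≤ t ^ 2 / 8 := by
    have := adp_nonneg_of_deriv (fun τ => τ ^ 2 / 8 - f τ)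
      (fun τ => τ / 4 - (m * Real.exp τ / (1 - m + m * Real.exp τ) - m))
      (fun τ _ => by
        have := ((hasDerivAt_pow 2 τ).div_const 8).sub (hder1 τ)
        exact this.congr_deriv (by push_cast; ring))
      (by simp [hf]) (fun τ hτ => hg1nn τ hτ) ht
    linarith
  have hflog : Real.log ((1 - m + m * Real.exp t) * Real.exp (-(t * m))) = f t := by
    rw [Real.log_mul (hd t).ne' (Real.exp_ne_zero _), Real.log_exp, hf]
    ring
  have hpos : 0 < (1 - m + m * Real.exp t) * Real.exp (-(t * m)) :=
    mul_pos (hd t) (Real.exp_pos _)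
  calc (1 - m + m * Real.exp t) * Real.exp (-(t * m))
      = Real.exp (f t) := by rw [← hflog, Real.exp_log hpos]
    _ ≤ _ := Real.exp_le_exp.2 hfle

lemma adp_hoeffding_pt {m : ℝ} (h0 : 0 ≤ m) (h1 : m ≤ 1) (t : ℝ) :
    (1 - m + m * Real.exp t) * Real.exp (-(t * m)) ≤ Real.exp (t ^ 2 / 8) := by
  rcases le_or_gt 0 t with ht | ht
  · exact adp_hoeffding_core h0 h1 ht
  · have key : (1 - m + m * Real.exp t) * Real.exp (-(t * m)) =
        (1 - (1 - m) + (1 - m) * Real.exp (-t)) * Real.exp (-(-t * (1 - m))) := by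
      have e1 : Real.exp t * Real.exp (-(t * m)) = Real.exp (t - t * m) := by
        rw [← Real.exp_add]; ring_nf
      have e2 : Real.exp (-t) * Real.exp (-(-t * (1 - m))) = Real.exp (-(t * m)) := by
        rw [← Real.exp_add]; ring_nf
      have e3 : Real.exp (-(-t * (1 - m))) = Real.exp (t - t * m) := by ring_nf
      nlinarith [e1, e2, e3]
    rw [key]
    have := adp_hoeffding_core (by linarith : (0:ℝ) ≤ 1 - m) (by linarith)
      (by linarith : 0 ≤ -t)
    calc _ ≤ Real.exp ((-t) ^ 2 / 8) := this
      _ = Real.exp (t ^ 2 / 8) := by ring_nf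

lemma adp_bennett_pt {a b p t : ℝ} (hb : 0 ≤ b) (hab : a + b ≤ p) (ht : 0 ≤ t) :
    (1 + (Real.exp t - 1) * a + (Real.exp (-t) - 1) * b) * Real.exp (-(t * (a - b))) ≤
      Real.exp (p * (Real.exp t - 1 - t)) := by
  have h1 : (1 + (Real.exp t - 1) * a + (Real.exp (-t) - 1) * b) ≤
      Real.exp ((Real.exp t - 1) * a + (Real.exp (-t) - 1) * b) := by
    have := Real.add_one_le_exp ((Real.exp t - 1) * a + (Real.exp (-t) - 1) * b)
    linarith
  have h2 : (1 + (Real.exp t - 1) * a + (Real.exp (-t) - 1) * b) * Real.exp (-(t * (a - b))) ≤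
      Real.exp ((Real.exp t - 1) * a + (Real.exp (-t) - 1) * b) * Real.exp (-(t * (a - b))) :=
    mul_le_mul_of_nonneg_right h1 (Real.exp_pos _).le
  refine h2.trans ?_
  rw [← Real.exp_add]
  apply Real.exp_le_exp.2
  have c1 : 0 ≤ Real.exp t - 1 - t := by linarith [Real.add_one_le_exp t]
  have c3 : Real.exp (-t) - 1 + t ≤ Real.exp t - 1 - t := by
    have sinh : 0 ≤ Real.exp t - Real.exp (-t) - 2 * t := by
      have := adp_nonneg_of_deriv (fun τ => Real.exp τ - Real.exp (-τ) - 2 * τ)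
        (fun τ => Real.exp τ + Real.exp (-τ) - 2)
        (fun τ _ => by
          have h1 : HasDerivAt (fun τ : ℝ => Real.exp (-τ)) (-Real.exp (-τ)) τ := by
            simpa [Function.comp_def] using (Real.hasDerivAt_exp (-τ)).comp τ ((hasDerivAt_id τ).neg)
          have h2 : HasDerivAt (fun τ : ℝ => 2 * τ) 2 τ := by
            simpa using (hasDerivAt_id τ).const_mul 2
          exact (((Real.hasDerivAt_exp τ).sub h1).sub h2).congr_deriv (by ring))
        (by simp)
        (fun τ _ => by
          show 0 ≤ Real.exp τ + Real.exp (-τ) - 2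
          have h3 : Real.exp τ * Real.exp (-τ) = 1 := by
            rw [← Real.exp_add]; simp
          nlinarith [sq_nonneg (Real.exp τ - 1), Real.exp_pos τ]) ht
      simpa using this
    linarith
  nlinarith [mul_le_mul_of_nonneg_left c3 hb,
    mul_le_mul_of_nonneg_right c1 (by linarith : 0 ≤ p - a - b)]

lemma adp_psi_ineq {u : ℝ} (hu : 0 ≤ u) : 2 * u ≤ (1 + u) * Real.log (1 + 2 * u) := by
  have key := adp_nonneg_of_deriv (fun u => (1 + u) * Real.log (1 + 2 * u) - 2 * u)
    (fun u => 1 * Real.log (1 + 2 * u) + (1 + u) * (2 / (1 + 2 * u)) - 2)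
    (fun v hv => by
      have hpos : (0:ℝ) < 1 + 2 * v := by linarith
      have h1 : HasDerivAt (fun u : ℝ => 1 + 2 * u) 2 v := by
        simpa using ((hasDerivAt_id v).const_mul 2).const_add 1
      have hlog : HasDerivAt (fun u : ℝ => Real.log (1 + 2 * u)) (2 / (1 + 2 * v)) v :=
        h1.log hpos.ne'
      have hone : HasDerivAt (fun u : ℝ => 1 + u) 1 v := by
        simpa using (hasDerivAt_id v).const_add 1
      have h2 : HasDerivAt (fun u : ℝ => 2 * u) 2 v := by
        simpa using (hasDerivAt_id v).const_mul 2
      exact (hone.mul hlog).sub h2)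
    (by simp)
    (fun v hv => by
      have hpos : (0:ℝ) < 1 + 2 * v := by linarith
      have hlog_ge : 1 - (1 + 2 * v)⁻¹ ≤ Real.log (1 + 2 * v) := by
        have := Real.log_le_sub_one_of_pos (inv_pos.2 hpos)
        rw [Real.log_inv] at this
        linarith
      have e : (1 + v) * (2 / (1 + 2 * v)) - 2 + (1 - (1 + 2 * v)⁻¹) = 0 := by
        field_simp
        ring
      linarith) hu
  have key' : 0 ≤ (1 + u) * Real.log (1 + 2 * u) - 2 * u := key
  linarith

lemma adp_key_ineq {u : ℝ} (hu : 0 ≤ u) :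
    2 * u + u * Real.log (1 + u) ≤ (2 * u + 1) * Real.log (1 + 2 * u) := by
  have h1 := adp_psi_ineq hu
  have h2 : u * Real.log (1 + u) ≤ u * Real.log (1 + 2 * u) :=
    mul_le_mul_of_nonneg_left
      (Real.log_le_log (by linarith) (by linarith)) hu
  nlinarith [h1, h2]

variable {Z : Type*} [MeasurableSpace Z] (D : Measure Z) [IsProbabilityMeasure D]

lemma adp_integrable_of_bdd {h : Z → ℝ} (hm : Measurable h) (C : ℝ) (hb : ∀ z, |h z| ≤ C) :
    Integrable h D := by
  refine Integrable.mono' (integrable_const C) hm.aestronglyMeasurable ?_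
  exact Filter.Eventually.of_forall fun z => by simpa using hb z

lemma adp_bval_abs {Z' : Type*} {q : Z' → ℝ} (hv : ∀ z, q z = 0 ∨ q z = 1) :
    ∀ z, |q z| ≤ 1 := by
  intro z; rcases hv z with h | h <;> simp [h]

lemma adp_chernoff (n : ℕ) (h : Z → ℝ) (hm : Measurable h) (hb : ∀ z, |h z| ≤ 1)
    (t r c : ℝ) (ht : 0 ≤ t)
    (hc : (∫ z, Real.exp (t * (h z - ∫ w, h w ∂D)) ∂D) ≤ c) :
    (Measure.pi fun _ : Fin n => D) {ω | r ≤ (∑ j, h (ω j)) - n * ∫ w, h w ∂D} ≤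
      ENNReal.ofReal (Real.exp (-(t * r)) * c ^ n) := by
  set m := ∫ w, h w ∂D with hmdef
  set μ : Measure (Fin n → Z) := Measure.pi fun _ : Fin n => D with hμ
  haveI : IsProbabilityMeasure μ := by rw [hμ]; infer_instance
  set G : (Fin n → Z) → ℝ := fun ω => Real.exp (t * ((∑ j, h (ω j)) - n * m)) with hG
  have hGeq : ∀ ω, G ω = ∏ j : Fin n, Real.exp (t * (h (ω j) - m)) := by
    intro ω
    have hsum : ∑ j, t * (h (ω j) - m) = t * ((∑ j, h (ω j)) - n * m) := by
      rw [← Finset.mul_sum, Finset.sum_sub_distrib, Finset.sum_const, Finset.card_univ,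
        Fintype.card_fin, nsmul_eq_mul]
    show Real.exp (t * ((∑ j, h (ω j)) - n * m)) = _
    rw [← hsum, Real.exp_sum]
  have hSmeas : Measurable (fun ω : Fin n → Z => ∑ j, h (ω j)) :=
    Finset.measurable_sum Finset.univ (fun j _ => hm.comp (measurable_pi_apply j))
  have hGmeas : Measurable G :=
    Real.measurable_exp.comp (((hSmeas.sub_const (n * m)).const_mul t))
  have hGbd : ∀ ω, |G ω| ≤ Real.exp (t * (2 * n)) := by
    intro ω
    rw [abs_of_pos (Real.exp_pos _)]
    apply Real.exp_le_exp.2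
    apply mul_le_mul_of_nonneg_left _ ht
    have h1 : |∑ j, h (ω j)| ≤ n := by
      calc |∑ j, h (ω j)| ≤ ∑ j, |h (ω j)| := Finset.abs_sum_le_sum_abs _ _
        _ ≤ ∑ _j : Fin n, (1:ℝ) := Finset.sum_le_sum fun j _ => hb _
        _ = n := by simp
    have hmabs : |m| ≤ 1 := by
      rw [hmdef]
      calc |∫ w, h w ∂D| ≤ ∫ w, |h w| ∂D := by
            simpa using norm_integral_le_integral_norm (μ := D) h
        _ ≤ ∫ _w, (1:ℝ) ∂D := integral_mono (adp_integrable_of_bdd D hm 1 hb).abs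
            (integrable_const 1) (fun z => hb z)
        _ = 1 := by simp
    have h2 : |(n:ℝ) * m| ≤ n := by
      rw [abs_mul, abs_of_nonneg (Nat.cast_nonneg n)]
      nlinarith [Nat.cast_nonneg (α := ℝ) n]
    cases abs_le.1 h1; cases abs_le.1 h2; linarith
  have hGint : Integrable G μ := adp_integrable_of_bdd μ hGmeas _ hGbd
  have hGnn : 0 ≤ᵐ[μ] G := Filter.Eventually.of_forall fun ω => (Real.exp_pos _).le
  have hGval : ∫ ω, G ω ∂μ = (∫ z, Real.exp (t * (h z - m)) ∂D) ^ n := by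
    letI : MeasureSpace Z := ⟨D⟩
    have hvol : μ = (volume : Measure (Fin n → Z)) := by
      rw [hμ, MeasureTheory.volume_pi]
      rfl
    rw [hvol]
    calc ∫ ω, G ω = ∫ ω : Fin n → Z, ∏ j, Real.exp (t * (h (ω j) - m)) := by
          exact integral_congr_ae (Filter.Eventually.of_forall hGeq)
      _ = (∫ z, Real.exp (t * (h z - m))) ^ (Fintype.card (Fin n)) :=
          MeasureTheory.integral_fintype_prod_eq_pow (ι := Fin n) (fun z => Real.exp (t * (h z - m)))
      _ = _ := by rw [Fintype.card_fin]; rfl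
  have hmgf_nn : 0 ≤ ∫ z, Real.exp (t * (h z - m)) ∂D :=
    integral_nonneg fun z => (Real.exp_pos _).le
  have markov := mul_meas_ge_le_integral_of_nonneg hGnn hGint (Real.exp (t * r))
  have hsub : {ω : Fin n → Z | r ≤ (∑ j, h (ω j)) - n * m} ⊆
      {ω | Real.exp (t * r) ≤ G ω} := by
    intro ω hω
    simp only [Set.mem_setOf_eq] at *
    exact Real.exp_le_exp.2 (mul_le_mul_of_nonneg_left hω ht)
  have hμS := measure_mono (μ := μ) hsub
  have hfin : μ {ω : Fin n → Z | r ≤ (∑ j, h (ω j)) - n * m} ≠ ⊤ := measure_ne_top _ _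
  have key : (μ {ω : Fin n → Z | r ≤ (∑ j, h (ω j)) - n * m}).toReal ≤
      Real.exp (-(t * r)) * c ^ n := by
    have h1 : (μ {ω : Fin n → Z | r ≤ (∑ j, h (ω j)) - n * m}).toReal ≤
        (μ {ω | Real.exp (t * r) ≤ G ω}).toReal :=
      ENNReal.toReal_mono (measure_ne_top _ _) hμS
    have h2 : Real.exp (t * r) * (μ {ω | Real.exp (t * r) ≤ G ω}).toReal ≤ c ^ n := by
      calc _ ≤ ∫ ω, G ω ∂μ := markov
        _ = (∫ z, Real.exp (t * (h z - m)) ∂D) ^ n := hGval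
        _ ≤ c ^ n := pow_le_pow_left₀ hmgf_nn hc n
    have hexp := Real.exp_pos (t * r)
    rw [Real.exp_neg]
    rw [← le_div_iff₀' hexp] at h2
    calc _ ≤ (μ {ω | Real.exp (t * r) ≤ G ω}).toReal := h1
      _ ≤ c ^ n / Real.exp (t * r) := h2
      _ = (Real.exp (t * r))⁻¹ * c ^ n := by rw [div_eq_inv_mul]
  calc μ _ = ENNReal.ofReal (μ {ω : Fin n → Z | r ≤ (∑ j, h (ω j)) - n * m}).toReal :=
        (ENNReal.ofReal_toReal hfin).symm
    _ ≤ _ := ENNReal.ofReal_le_ofReal key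

lemma adp_mgf_bernoulli (q : Z → ℝ) (hm : Measurable q) (hv : ∀ z, q z = 0 ∨ q z = 1) (t : ℝ) :
    ∫ z, Real.exp (t * (q z - ∫ w, q w ∂D)) ∂D ≤ Real.exp (t ^ 2 / 8) := by
  set m := ∫ w, q w ∂D with hmdef
  have hqint : Integrable q D := adp_integrable_of_bdd D hm 1 (adp_bval_abs hv)
  have hm0 : 0 ≤ m := integral_nonneg fun z => by rcases hv z with h | h <;> simp [h]
  have hm1 : m ≤ 1 := by
    calc m ≤ ∫ _z, (1:ℝ) ∂D := integral_mono hqint (integrable_const 1)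
            (fun z => by rcases hv z with h | h <;> simp [h])
      _ = 1 := by simp
  have hpt : ∀ z, Real.exp (t * (q z - m)) =
      (1 + (Real.exp t - 1) * q z) * Real.exp (-(t * m)) := by
    intro z
    rcases hv z with h | h <;> rw [h]
    · simp
    · have : (1 + (Real.exp t - 1) * 1) * Real.exp (-(t * m)) =
          Real.exp t * Real.exp (-(t * m)) := by ring
      rw [this, ← Real.exp_add]
      ring_nf
  calc ∫ z, Real.exp (t * (q z - m)) ∂D
      = ∫ z, (1 + (Real.exp t - 1) * q z) * Real.exp (-(t * m)) ∂D := by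
        exact integral_congr_ae (Filter.Eventually.of_forall hpt)
    _ = (∫ z, (1 + (Real.exp t - 1) * q z) ∂D) * Real.exp (-(t * m)) := integral_mul_const _ _
    _ = (1 + (Real.exp t - 1) * m) * Real.exp (-(t * m)) := by
        rw [integral_add (integrable_const 1) (hqint.const_mul _),
          MeasureTheory.integral_const_mul]
        simp [hmdef]
    _ = (1 - m + m * Real.exp t) * Real.exp (-(t * m)) := by ring_nf
    _ ≤ _ := adp_hoeffding_pt hm0 hm1 t

lemma adp_mgf_diff (f q : Z → ℝ) (hfm : Measurable f) (hqm : Measurable q)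
    (hfv : ∀ z, f z = 0 ∨ f z = 1) (hqv : ∀ z, q z = 0 ∨ q z = 1)
    (t p : ℝ) (ht : 0 ≤ t) (hp : 1 - p ≤ (D {z | q z = f z}).toReal) :
    ∫ z, Real.exp (t * ((f z - q z) - ∫ w, (f w - q w) ∂D)) ∂D ≤
      Real.exp (p * (Real.exp t - 1 - t)) := by
  set dp : Z → ℝ := fun z => f z * (1 - q z) with hdp
  set dm : Z → ℝ := fun z => q z * (1 - f z) with hdm
  have hdpv : ∀ z, dp z = 0 ∨ dp z = 1 := by
    intro z; rcases hfv z with h1 | h1 <;> rcases hqv z with h2 | h2 <;> simp [hdp, h1, h2]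
  have hdmv : ∀ z, dm z = 0 ∨ dm z = 1 := by
    intro z; rcases hfv z with h1 | h1 <;> rcases hqv z with h2 | h2 <;> simp [hdm, h1, h2]
  have hdpm : Measurable dp := hfm.mul ((measurable_const.sub hqm))
  have hdmm : Measurable dm := hqm.mul ((measurable_const.sub hfm))
  have hdpint : Integrable dp D := adp_integrable_of_bdd D hdpm 1 (adp_bval_abs hdpv)
  have hdmint : Integrable dm D := adp_integrable_of_bdd D hdmm 1 (adp_bval_abs hdmv)
  set a := ∫ z, dp z ∂D with ha
  set b := ∫ z, dm z ∂D with hb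
  have ha0 : 0 ≤ a := integral_nonneg fun z => by rcases hdpv z with h | h <;> simp [h]
  have hb0 : 0 ≤ b := integral_nonneg fun z => by rcases hdmv z with h | h <;> simp [h]
  have hdiff : ∀ z, f z - q z = dp z - dm z := by intro z; simp [hdp, hdm]; ring
  have hν : ∫ w, (f w - q w) ∂D = a - b := by
    rw [show (fun w => f w - q w) = fun w => dp w - dm w from funext hdiff]
    exact integral_sub hdpint hdmint
  have hS : MeasurableSet {z | q z = f z} := measurableSet_eq_fun hqm hfm
  have hind : ∀ z, Set.indicator {z | q z = f z} (1 : Z → ℝ) z ≤ 1 - (dp z + dm z) := by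
    intro z
    by_cases hz : z ∈ {z | q z = f z}
    · rw [Set.indicator_of_mem hz]
      have hqf : q z = f z := hz
      rcases hfv z with h1 | h1 <;> simp [hdp, hdm, h1, hqf]
    · rw [Set.indicator_of_notMem hz]
      rcases hdpv z with h1 | h1 <;> rcases hdmv z with h2 | h2 <;>
        rcases hfv z with h3 | h3 <;> rcases hqv z with h4 | h4 <;>
        simp [hdp, hdm, h3, h4] at h1 h2 ⊢ <;> linarith
  have hsum_int : Integrable (fun z => dp z + dm z) D := hdpint.add hdmint
  have hone_int : Integrable (fun z => Set.indicator {z | q z = f z} (1 : Z → ℝ) z) D := by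
    have := (integrable_const (1:ℝ) (μ := D)).indicator hS
    exact this
  have hab : a + b ≤ p := by
    have h1 : (D {z | q z = f z}).toReal ≤ 1 - a - b := by
      calc (D {z | q z = f z}).toReal
          = ∫ z, Set.indicator {z | q z = f z} (1 : Z → ℝ) z ∂D :=
            (MeasureTheory.integral_indicator_one hS).symm
        _ ≤ ∫ z, (1 - (dp z + dm z)) ∂D := integral_mono
            hone_int ((integrable_const (1:ℝ)).sub hsum_int) hind
        _ = (∫ _z, (1:ℝ) ∂D) - ∫ z, (dp z + dm z) ∂D :=
            integral_sub (integrable_const 1) hsum_int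
        _ = 1 - a - b := by
          rw [integral_add hdpint hdmint]
          simp
          ring
    linarith [hp.trans h1]
  have hpt : ∀ z, Real.exp (t * ((f z - q z) - (a - b))) =
      (1 + (Real.exp t - 1) * dp z + (Real.exp (-t) - 1) * dm z) *
        Real.exp (-(t * (a - b))) := by
    intro z
    have key : Real.exp (t * (f z - q z)) =
        1 + (Real.exp t - 1) * dp z + (Real.exp (-t) - 1) * dm z := by
      rcases hfv z with h1 | h1 <;> rcases hqv z with h2 | h2 <;>
        simp [hdp, hdm, h1, h2]
    have e : t * ((f z - q z) - (a - b)) = t * (f z - q z) + (-(t * (a - b))) := by ring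
    rw [e, Real.exp_add, key]
  calc ∫ z, Real.exp (t * ((f z - q z) - ∫ w, (f w - q w) ∂D)) ∂D
      = ∫ z, (1 + (Real.exp t - 1) * dp z + (Real.exp (-t) - 1) * dm z) *
          Real.exp (-(t * (a - b))) ∂D := by
        rw [hν]; exact integral_congr_ae (Filter.Eventually.of_forall hpt)
    _ = (∫ z, (1 + (Real.exp t - 1) * dp z + (Real.exp (-t) - 1) * dm z) ∂D) *
          Real.exp (-(t * (a - b))) := integral_mul_const _ _
    _ = (1 + (Real.exp t - 1) * a + (Real.exp (-t) - 1) * b) *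
          Real.exp (-(t * (a - b))) := by
        have h1 : Integrable (fun z => 1 + (Real.exp t - 1) * dp z) D :=
          (integrable_const 1).add (hdpint.const_mul _)
        have e1 : ∫ z, (1 + (Real.exp t - 1) * dp z + (Real.exp (-t) - 1) * dm z) ∂D
            = (∫ z, (1 + (Real.exp t - 1) * dp z) ∂D) +
              ∫ z, (Real.exp (-t) - 1) * dm z ∂D :=
          integral_add h1 (hdmint.const_mul _)
        have e2 : ∫ z, (1 + (Real.exp t - 1) * dp z) ∂D
            = (∫ _z, (1:ℝ) ∂D) + ∫ z, (Real.exp t - 1) * dp z ∂D :=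
          integral_add (integrable_const 1) (hdpint.const_mul _)
        rw [e1, e2, MeasureTheory.integral_const_mul, MeasureTheory.integral_const_mul]
        simp [ha, hb]
    _ ≤ _ := adp_bennett_pt hb0 hab ht

end Helpers


/-- the deviation events -/
def adpEv {Z : Type*} [MeasurableSpace Z] (D : Measure Z) (n : ℕ) (ε : ℝ) (h : Z → ℝ) :
    Set (Fin n → Z) :=
  {ω | (n : ℝ) * ε / 2 ≤ (∑ j, h (ω j)) - n * ∫ w, h w ∂D}

/-- Corollary 1 (adaptive classification): the adaptively chosen queries all lie
in the set `F` of at most `(n+1)^{k-1}` potential queries of a deterministic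
analyst; if `F` admits an `η` similarity cover of size at most
`(n+1)^{k^{1-α}}` for the stated `ε` and `η`, then with probability `1 - δ`
every adaptively chosen query has deviation at most `ε`. -/
theorem stmt_17 {Z : Type*} [MeasurableSpace Z] (D : Measure Z) [IsProbabilityMeasure D]
    (n k : ℕ) (hn : 0 < n) (hk : 0 < k)
    (α δ ε η : ℝ) (hα0 : 0 ≤ α) (hα1 : α ≤ 1) (hδ : 0 < δ) (hδ1 : δ < 1)
    (hε : ε = Real.sqrt (4 * ((k : ℝ) ^ (1 - α) * Real.log (n + 1) + Real.log (2 / δ)) / n))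
    (hη : η = 1 - ε / (4 * (Real.exp (ε * (k : ℝ) ^ α) - 1)))
    (F : Finset (Z → ℝ)) (hFcard : F.card ≤ (n + 1) ^ (k - 1))
    (hFmeas : ∀ f ∈ F, Measurable f) (hFval : ∀ f ∈ F, ∀ z, f z = 0 ∨ f z = 1)
    (M : Finset (Z → ℝ)) (hMmeas : ∀ m ∈ M, Measurable m)
    (hMval : ∀ m ∈ M, ∀ z, m z = 0 ∨ m z = 1)
    (hMcard : (M.card : ℝ) ≤ (n + 1 : ℝ) ^ ((k : ℝ) ^ (1 - α)))
    (hcover : ∀ f ∈ F, ∃ q' ∈ M, ∃ q'' ∈ M,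
      (∫ z, q' z ∂D) ≤ (∫ z, f z ∂D) ∧ (∫ z, f z ∂D) ≤ (∫ z, q'' z ∂D) ∧
      η ≤ (D {z | q' z = f z}).toReal ∧ η ≤ (D {z | q'' z = f z}).toReal)
    (Qs : Fin k → (Fin n → Z) → (Z → ℝ)) (hQs : ∀ i ω, Qs i ω ∈ F) :
    ((Measure.pi fun _ : Fin n => D)
      {ω | ∀ i : Fin k,
        |(1 / n : ℝ) * ∑ j, (Qs i ω) (ω j) - ∫ z, (Qs i ω) z ∂D| ≤ ε}).toReal ≥
      1 - δ := by
  classical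
  set P : Measure (Fin n → Z) := Measure.pi fun _ : Fin n => D with hP
  haveI hPprob : IsProbabilityMeasure P := by rw [hP]; infer_instance
  -- numeric facts
  have hn1 : (1:ℝ) ≤ (n:ℝ) := by exact_mod_cast hn
  have hnpos : (0:ℝ) < (n:ℝ) := by linarith
  set L : ℝ := Real.log ((n:ℝ) + 1) with hLdef
  have hlog2pos : (0:ℝ) < Real.log 2 := Real.log_pos (by norm_num)
  have hL2 : Real.log 2 ≤ L := Real.log_le_log (by norm_num) (by linarith)
  have hLpos : (0:ℝ) < L := lt_of_lt_of_le hlog2pos hL2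
  have hδ2 : (1:ℝ) < 2 / δ := by rw [lt_div_iff₀ hδ]; linarith
  have hlogδ : (0:ℝ) < Real.log (2 / δ) := Real.log_pos hδ2
  have hk1 : (1:ℝ) ≤ (k:ℝ) := by exact_mod_cast hk
  have hkpos : (0:ℝ) < (k:ℝ) := by linarith
  have hkα : (1:ℝ) ≤ (k:ℝ) ^ α := Real.one_le_rpow hk1 hα0
  have hkβ : (1:ℝ) ≤ (k:ℝ) ^ (1 - α) := Real.one_le_rpow hk1 (by linarith)
  have hkαpos : (0:ℝ) < (k:ℝ) ^ α := lt_of_lt_of_le one_pos hkα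
  set A : ℝ := (k:ℝ) ^ (1 - α) * L + Real.log (2 / δ) with hAdef
  have hApos : (0:ℝ) < A := by
    have h1 : L ≤ (k:ℝ) ^ (1 - α) * L := le_mul_of_one_le_left hLpos.le hkβ
    rw [hAdef]; linarith
  have hin : (0:ℝ) < 4 * A / n := by positivity
  have hεeq : ε = Real.sqrt (4 * A / n) := hε
  have hεpos : (0:ℝ) < ε := by rw [hεeq]; exact Real.sqrt_pos.2 hin
  have hε2 : ε ^ 2 = 4 * A / n := by rw [hεeq]; exact Real.sq_sqrt hin.le
  have hnε2 : (n:ℝ) * ε ^ 2 = 4 * A := by rw [hε2]; field_simp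
  set s : ℝ := ε * (k:ℝ) ^ α with hs
  have hspos : (0:ℝ) < s := mul_pos hεpos hkαpos
  set u : ℝ := Real.exp s - 1 with hu
  have hupos : (0:ℝ) < u := by
    have : Real.exp 0 < Real.exp s := Real.exp_lt_exp.2 hspos
    simp only [Real.exp_zero] at this
    simp [hu]; linarith
  have hηeq : 1 - η = ε / (4 * u) := by rw [hη, hu, hs]; ring
  -- choose cover elements
  choose q' hq'M q'' hq''M hi1 hi2 hsim1 hsim2 using hcover
  -- the bad events
  set BadM : Set (Fin n → Z) :=
    ⋃ q ∈ M, (adpEv D n ε q ∪ adpEv D n ε (fun z => -(q z))) with hBadM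
  set BadF : Set (Fin n → Z) :=
    ⋃ f ∈ F.attach, (adpEv D n ε (fun z => f.1 z - q' f.1 f.2 z) ∪
      adpEv D n ε (fun z => q' f.1 f.2 z - f.1 z)) with hBadF
  -- pointwise inclusion
  have hincl : ∀ ω, ω ∉ BadM ∪ BadF →
      ω ∈ {ω | ∀ i : Fin k,
        |(1 / n : ℝ) * ∑ j, (Qs i ω) (ω j) - ∫ z, (Qs i ω) z ∂D| ≤ ε} := by
    intro ω hω
    rw [Set.mem_union] at hω
    push_neg at hω
    obtain ⟨hω1, hω2⟩ := hω
    intro i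
    set f : Z → ℝ := Qs i ω with hfdef
    have hf : f ∈ F := hQs i ω
    set qf : Z → ℝ := q' f hf with hqfdef
    have hqM : qf ∈ M := hq'M f hf
    have hMnot : ω ∉ adpEv D n ε qf ∪ adpEv D n ε (fun z => -(qf z)) := by
      intro hc
      exact hω1 (Set.mem_biUnion hqM hc)
    have hFnot : ω ∉ adpEv D n ε (fun z => f z - qf z) ∪
        adpEv D n ε (fun z => qf z - f z) := by
      intro hc
      exact hω2 (Set.mem_biUnion (Finset.mem_attach F ⟨f, hf⟩) hc)
    rw [Set.mem_union] at hMnot hFnot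
    push_neg at hMnot hFnot
    obtain ⟨hA1, hA2⟩ := hMnot
    obtain ⟨hB1, hB2⟩ := hFnot
    simp only [adpEv, Set.mem_setOf_eq, not_le] at hA1 hA2 hB1 hB2
    have hfint : Integrable f D := adp_integrable_of_bdd D (hFmeas f hf) 1
      (adp_bval_abs (hFval f hf))
    have hqint : Integrable qf D := adp_integrable_of_bdd D (hMmeas qf hqM) 1
      (adp_bval_abs (hMval qf hqM))
    set Sf : ℝ := ∑ j, f (ω j) with hSf
    set Sq : ℝ := ∑ j, qf (ω j) with hSq
    set mf : ℝ := ∫ z, f z ∂D with hmf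
    set mq : ℝ := ∫ z, qf z ∂D with hmq
    have e1 : ∑ j, (-(qf (ω j))) = -Sq := by rw [hSq, ← Finset.sum_neg_distrib]
    have e2 : ∫ w, (-(qf w)) ∂D = -mq := by rw [hmq, ← integral_neg]
    have e3 : ∑ j, (f (ω j) - qf (ω j)) = Sf - Sq := Finset.sum_sub_distrib _ _
    have e4 : ∫ w, (f w - qf w) ∂D = mf - mq := integral_sub hfint hqint
    have e5 : ∑ j, (qf (ω j) - f (ω j)) = Sq - Sf := Finset.sum_sub_distrib _ _
    have e6 : ∫ w, (qf w - f w) ∂D = mq - mf := integral_sub hqint hfint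
    rw [e1, e2] at hA2
    rw [e3, e4] at hB1
    rw [e5, e6] at hB2
    have habs : |Sf - (n:ℝ) * mf| ≤ (n:ℝ) * ε := by
      have hr1 : (n:ℝ) * (mf - mq) = (n:ℝ) * mf - (n:ℝ) * mq := by ring
      have hr2 : (n:ℝ) * (mq - mf) = (n:ℝ) * mq - (n:ℝ) * mf := by ring
      rw [abs_le]
      constructor <;> linarith [hr1, hr2]
    show |(1 / n : ℝ) * Sf - mf| ≤ ε
    have heq : (1 / n : ℝ) * Sf - mf = (Sf - (n:ℝ) * mf) / n := by
      field_simp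
    rw [heq, abs_div, abs_of_pos hnpos, div_le_iff₀ hnpos]
    linarith
  -- measure of the M-events
  have hMbound : ∀ q ∈ M, P (adpEv D n ε q) ≤ ENNReal.ofReal (Real.exp (-(2 * A))) ∧
      P (adpEv D n ε (fun z => -(q z))) ≤ ENNReal.ofReal (Real.exp (-(2 * A))) := by
    intro q hq
    have hqm := hMmeas q hq
    have hqv := hMval q hq
    have hexpeq : Real.exp (-(2 * ε * ((n:ℝ) * ε / 2))) * Real.exp (ε ^ 2 / 2) ^ n =
        Real.exp (-(2 * A)) := by
      rw [← Real.exp_nat_mul, ← Real.exp_add]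
      congr 1
      linear_combination (-(1:ℝ) / 2) * hnε2
    constructor
    · have hc := adp_mgf_bernoulli D q hqm hqv (2 * ε)
      rw [show (2 * ε) ^ 2 / 8 = ε ^ 2 / 2 by ring] at hc
      have := adp_chernoff D n q hqm (adp_bval_abs hqv) (2 * ε) ((n:ℝ) * ε / 2)
        (Real.exp (ε ^ 2 / 2)) (by positivity) hc
      rw [hexpeq] at this
      exact this
    · have hc0 := adp_mgf_bernoulli D q hqm hqv (-(2 * ε))
      rw [show (-(2 * ε)) ^ 2 / 8 = ε ^ 2 / 2 by ring] at hc0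
      have hcongr : (fun z => Real.exp (2 * ε * ((-(q z)) - ∫ w, (-(q w)) ∂D))) =
          (fun z => Real.exp ((-(2 * ε)) * (q z - ∫ w, q w ∂D))) := by
        funext z
        rw [integral_neg]
        congr 1
        ring
      have hc : ∫ z, Real.exp (2 * ε * ((-(q z)) - ∫ w, (-(q w)) ∂D)) ∂D ≤
          Real.exp (ε ^ 2 / 2) := by
        rw [hcongr]
        exact hc0
      have := adp_chernoff D n (fun z => -(q z)) hqm.neg
        (fun z => by rw [abs_neg]; exact adp_bval_abs hqv z) (2 * ε) ((n:ℝ) * ε / 2)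
        (Real.exp (ε ^ 2 / 2)) (by positivity) hc
      rw [hexpeq] at this
      exact this
  -- measure of the F-events
  set t : ℝ := Real.log (1 + 2 * u) with htdef
  have ht0 : 0 ≤ t := Real.log_nonneg (by linarith)
  have hexp_t : Real.exp t = 1 + 2 * u := Real.exp_log (by linarith)
  have hcore : Real.exp (-(t * ((n:ℝ) * ε / 2))) *
      Real.exp ((ε / (4 * u)) * (Real.exp t - 1 - t)) ^ n ≤
      Real.exp (-((k:ℝ) ^ α * A)) := by
    rw [← Real.exp_nat_mul, ← Real.exp_add]
    apply Real.exp_le_exp.2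
    have hkA : (k:ℝ) ^ α * A = (n:ℝ) * ε * s / 4 := by
      rw [hs]
      linear_combination (-((k:ℝ) ^ α) / 4) * hnε2
    have hlog1u : Real.log (1 + u) = s := by
      rw [hu]
      simp
    have hkey : 2 * u + u * s ≤ (2 * u + 1) * t := by
      have := adp_key_ineq hupos.le
      rw [hlog1u, ← htdef] at this
      linarith
    have hfactor : -(t * ((n:ℝ) * ε / 2)) + (n:ℝ) * ((ε / (4 * u)) * (Real.exp t - 1 - t)) +
        (n:ℝ) * ε * s / 4 = ((n:ℝ) * ε / (4 * u)) * ((2 * u + u * s) - (2 * u + 1) * t) := by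
      rw [hexp_t]
      field_simp
      ring
    have hnn : (0:ℝ) ≤ (n:ℝ) * ε / (4 * u) := by positivity
    have hprod : ((n:ℝ) * ε / (4 * u)) * ((2 * u + u * s) - (2 * u + 1) * t) ≤ 0 :=
      mul_nonpos_of_nonneg_of_nonpos hnn (by linarith)
    rw [hkA]
    linarith [hfactor ▸ hprod]
  have hFbound : ∀ fp : {x // x ∈ F},
      P (adpEv D n ε (fun z => fp.1 z - q' fp.1 fp.2 z)) ≤
        ENNReal.ofReal (Real.exp (-((k:ℝ) ^ α * A))) ∧
      P (adpEv D n ε (fun z => q' fp.1 fp.2 z - fp.1 z)) ≤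
        ENNReal.ofReal (Real.exp (-((k:ℝ) ^ α * A))) := by
    rintro ⟨f, hf⟩
    set qf : Z → ℝ := q' f hf with hqfdef
    have hqM : qf ∈ M := hq'M f hf
    have hfm := hFmeas f hf
    have hqm := hMmeas qf hqM
    have hfv := hFval f hf
    have hqv := hMval qf hqM
    have hbdiff : ∀ (g h : Z → ℝ), (∀ z, g z = 0 ∨ g z = 1) → (∀ z, h z = 0 ∨ h z = 1) →
        ∀ z, |g z - h z| ≤ 1 := by
      intro g h hg hh z
      rcases hg z with h1 | h1 <;> rcases hh z with h2 | h2 <;> rw [h1, h2] <;> norm_num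
    have hηp : 1 - ε / (4 * u) = η := by linarith [hηeq]
    constructor
    · have hp : 1 - ε / (4 * u) ≤ (D {z | qf z = f z}).toReal := by
        rw [hηp]
        exact hsim1 f hf
      have hc := adp_mgf_diff D f qf hfm hqm hfv hqv t (ε / (4 * u)) ht0 hp
      have := adp_chernoff D n (fun z => f z - qf z) (hfm.sub hqm)
        (hbdiff f qf hfv hqv) t ((n:ℝ) * ε / 2)
        (Real.exp ((ε / (4 * u)) * (Real.exp t - 1 - t))) ht0 hc
      exact this.trans (ENNReal.ofReal_le_ofReal hcore)
    · have hseteq : {z | f z = qf z} = {z | qf z = f z} := by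
        ext z
        exact eq_comm
      have hp : 1 - ε / (4 * u) ≤ (D {z | f z = qf z}).toReal := by
        rw [hseteq, hηp]
        exact hsim1 f hf
      have hc := adp_mgf_diff D qf f hqm hfm hqv hfv t (ε / (4 * u)) ht0 hp
      have := adp_chernoff D n (fun z => qf z - f z) (hqm.sub hfm)
        (hbdiff qf f hqv hfv) t ((n:ℝ) * ε / 2)
        (Real.exp ((ε / (4 * u)) * (Real.exp t - 1 - t))) ht0 hc
      exact this.trans (ENNReal.ofReal_le_ofReal hcore)
  -- total bound for BadM
  have hexpδ : Real.exp (-(Real.log (2 / δ))) = δ / 2 := by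
    rw [Real.exp_neg, Real.exp_log (by positivity), inv_div]
  have hPBadM : P BadM ≤ ENNReal.ofReal (δ / 2) := by
    have h1 : P BadM ≤ ∑ q ∈ M, P (adpEv D n ε q ∪ adpEv D n ε (fun z => -(q z))) := by
      rw [hBadM]
      exact measure_biUnion_finset_le M _
    have h2 : ∑ q ∈ M, P (adpEv D n ε q ∪ adpEv D n ε (fun z => -(q z))) ≤
        ∑ _q ∈ M, (ENNReal.ofReal (Real.exp (-(2 * A))) +
          ENNReal.ofReal (Real.exp (-(2 * A)))) :=
      Finset.sum_le_sum fun q hq => (measure_union_le _ _).trans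
        (add_le_add (hMbound q hq).1 (hMbound q hq).2)
    have h3 : ∑ _q ∈ M, (ENNReal.ofReal (Real.exp (-(2 * A))) +
        ENNReal.ofReal (Real.exp (-(2 * A)))) =
        ENNReal.ofReal ((M.card : ℝ) * (Real.exp (-(2 * A)) + Real.exp (-(2 * A)))) := by
      rw [Finset.sum_const, nsmul_eq_mul,
        ← ENNReal.ofReal_add (Real.exp_pos _).le (Real.exp_pos _).le,
        ← ENNReal.ofReal_natCast M.card,
        ← ENNReal.ofReal_mul (Nat.cast_nonneg _)]
    have hMreal : (M.card : ℝ) * (Real.exp (-(2 * A)) + Real.exp (-(2 * A))) ≤ δ / 2 := by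
      have hcard : (M.card : ℝ) ≤ Real.exp (Real.log ((n:ℝ) + 1) * (k:ℝ) ^ (1 - α)) := by
        rw [← Real.rpow_def_of_pos (by linarith : (0:ℝ) < (n:ℝ) + 1)]
        exact hMcard
      have hsplit : Real.log ((n:ℝ) + 1) * (k:ℝ) ^ (1 - α) + -(2 * A) =
          -((k:ℝ) ^ (1 - α) * L) + -(Real.log (2 / δ)) + -(Real.log (2 / δ)) := by
        rw [hAdef, hLdef]
        ring
      have hexp1 : Real.exp (-((k:ℝ) ^ (1 - α) * L)) ≤ 1 := by
        apply Real.exp_le_one_iff.2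
        have := mul_nonneg (le_trans zero_le_one hkβ) hLpos.le
        linarith
      calc (M.card : ℝ) * (Real.exp (-(2 * A)) + Real.exp (-(2 * A)))
          ≤ Real.exp (Real.log ((n:ℝ) + 1) * (k:ℝ) ^ (1 - α)) *
            (Real.exp (-(2 * A)) + Real.exp (-(2 * A))) :=
            mul_le_mul_of_nonneg_right hcard (by positivity)
        _ = 2 * Real.exp (Real.log ((n:ℝ) + 1) * (k:ℝ) ^ (1 - α) + -(2 * A)) := by
            rw [Real.exp_add]
            ring
        _ = 2 * (Real.exp (-((k:ℝ) ^ (1 - α) * L)) * (δ / 2) * (δ / 2)) := by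
            rw [hsplit, Real.exp_add, Real.exp_add, hexpδ]
        _ ≤ δ / 2 := by
            have hEδ : Real.exp (-((k:ℝ) ^ (1 - α) * L)) * ((δ / 2) * (δ / 2)) ≤
                1 * ((δ / 2) * (δ / 2)) :=
              mul_le_mul_of_nonneg_right hexp1 (by positivity)
            have hδδ : δ * δ ≤ δ := by nlinarith
            nlinarith [hEδ, hδδ]
    calc P BadM ≤ _ := h1
      _ ≤ _ := h2
      _ = _ := h3
      _ ≤ ENNReal.ofReal (δ / 2) := ENNReal.ofReal_le_ofReal hMreal
  -- total bound for BadF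
  have hPBadF : P BadF ≤ ENNReal.ofReal (δ / 2) := by
    have h1 : P BadF ≤ ∑ fp ∈ F.attach, P (adpEv D n ε (fun z => fp.1 z - q' fp.1 fp.2 z) ∪
        adpEv D n ε (fun z => q' fp.1 fp.2 z - fp.1 z)) := by
      rw [hBadF]
      exact measure_biUnion_finset_le F.attach _
    have h2 : ∑ fp ∈ F.attach, P (adpEv D n ε (fun z => fp.1 z - q' fp.1 fp.2 z) ∪
        adpEv D n ε (fun z => q' fp.1 fp.2 z - fp.1 z)) ≤
        ∑ _fp ∈ F.attach, (ENNReal.ofReal (Real.exp (-((k:ℝ) ^ α * A))) +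
          ENNReal.ofReal (Real.exp (-((k:ℝ) ^ α * A)))) :=
      Finset.sum_le_sum fun fp _ => (measure_union_le _ _).trans
        (add_le_add (hFbound fp).1 (hFbound fp).2)
    have h3 : ∑ _fp ∈ F.attach, (ENNReal.ofReal (Real.exp (-((k:ℝ) ^ α * A))) +
        ENNReal.ofReal (Real.exp (-((k:ℝ) ^ α * A)))) =
        ENNReal.ofReal ((F.card : ℝ) *
          (Real.exp (-((k:ℝ) ^ α * A)) + Real.exp (-((k:ℝ) ^ α * A)))) := by
      rw [Finset.sum_const, Finset.card_attach, nsmul_eq_mul,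
        ← ENNReal.ofReal_add (Real.exp_pos _).le (Real.exp_pos _).le,
        ← ENNReal.ofReal_natCast F.card,
        ← ENNReal.ofReal_mul (Nat.cast_nonneg _)]
    have hFreal : (F.card : ℝ) *
        (Real.exp (-((k:ℝ) ^ α * A)) + Real.exp (-((k:ℝ) ^ α * A))) ≤ δ / 2 := by
      have hcast : ((k - 1 : ℕ) : ℝ) = (k:ℝ) - 1 := by
        rw [Nat.cast_sub hk]
        norm_num
      have hcardF : (F.card : ℝ) ≤ Real.exp (((k:ℝ) - 1) * L) := by
        have h0 : (F.card : ℝ) ≤ ((n:ℝ) + 1) ^ (k - 1 : ℕ) := by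
          exact_mod_cast hFcard
        have h1 : ((n:ℝ) + 1) = Real.exp L := (Real.exp_log (by linarith)).symm
        calc (F.card : ℝ) ≤ ((n:ℝ) + 1) ^ (k - 1 : ℕ) := h0
          _ = Real.exp L ^ (k - 1 : ℕ) := by rw [h1]
          _ = Real.exp (((k - 1 : ℕ) : ℝ) * L) := (Real.exp_nat_mul L (k - 1)).symm
          _ = Real.exp (((k:ℝ) - 1) * L) := by rw [hcast]
      have hkk : (k:ℝ) ^ α * (k:ℝ) ^ (1 - α) = (k:ℝ) := by
        rw [← Real.rpow_add hkpos, show α + (1 - α) = 1 by ring, Real.rpow_one]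
      have hexpF : Real.exp (-((k:ℝ) ^ α * A)) ≤
          Real.exp (-((k:ℝ) * L) + -(Real.log (2 / δ))) := by
        apply Real.exp_le_exp.2
        have hexpand : (k:ℝ) ^ α * A = (k:ℝ) * L + (k:ℝ) ^ α * Real.log (2 / δ) := by
          rw [hAdef, mul_add, ← mul_assoc, hkk]
        have hlogmul : Real.log (2 / δ) ≤ (k:ℝ) ^ α * Real.log (2 / δ) :=
          le_mul_of_one_le_left hlogδ.le hkα
        rw [hexpand]
        linarith
      have hexpL : Real.exp (-L) ≤ 1 / 2 := by
        have h1 : Real.exp (-L) ≤ Real.exp (-(Real.log 2)) :=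
          Real.exp_le_exp.2 (by linarith)
        have h2 : Real.exp (-(Real.log 2)) = 1 / 2 := by
          rw [Real.exp_neg, Real.exp_log two_pos]
          norm_num
        linarith
      calc (F.card : ℝ) * (Real.exp (-((k:ℝ) ^ α * A)) + Real.exp (-((k:ℝ) ^ α * A)))
          = (F.card : ℝ) * (2 * Real.exp (-((k:ℝ) ^ α * A))) := by ring
        _ ≤ Real.exp (((k:ℝ) - 1) * L) *
            (2 * Real.exp (-((k:ℝ) * L) + -(Real.log (2 / δ)))) := by
            apply mul_le_mul hcardF _ (by positivity) (Real.exp_pos _).le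
            linarith [hexpF]
        _ = 2 * (Real.exp (-L) * (δ / 2)) := by
            have hcomb : Real.exp (((k:ℝ) - 1) * L) *
                Real.exp (-((k:ℝ) * L) + -(Real.log (2 / δ))) = Real.exp (-L) * (δ / 2) := by
              rw [← Real.exp_add, show ((k:ℝ) - 1) * L + (-((k:ℝ) * L) + -(Real.log (2 / δ))) =
                -L + -(Real.log (2 / δ)) by ring, Real.exp_add, hexpδ]
            rw [← hcomb]
            ring
        _ ≤ 2 * ((1 / 2) * (δ / 2)) := by
            have := mul_le_mul_of_nonneg_right hexpL (le_of_lt (half_pos hδ))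
            linarith
        _ = δ / 2 := by ring
    calc P BadF ≤ _ := h1
      _ ≤ _ := h2
      _ = _ := h3
      _ ≤ ENNReal.ofReal (δ / 2) := ENNReal.ofReal_le_ofReal hFreal
  -- assemble
  set T : Set (Fin n → Z) := {ω | ∀ i : Fin k,
    |(1 / n : ℝ) * ∑ j, (Qs i ω) (ω j) - ∫ z, (Qs i ω) z ∂D| ≤ ε} with hT
  have hBadTot : P (BadM ∪ BadF) ≤ ENNReal.ofReal δ := by
    calc P (BadM ∪ BadF) ≤ P BadM + P BadF := measure_union_le _ _
      _ ≤ ENNReal.ofReal (δ / 2) + ENNReal.ofReal (δ / 2) := add_le_add hPBadM hPBadF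
      _ = ENNReal.ofReal δ := by
          rw [← ENNReal.ofReal_add (by linarith) (by linarith)]
          norm_num
  have hsub_univ : (Set.univ : Set (Fin n → Z)) ⊆ T ∪ (BadM ∪ BadF) := by
    intro ω _
    by_cases h : ω ∈ BadM ∪ BadF
    · exact Or.inr h
    · exact Or.inl (hincl ω h)
  have h1le : (1 : ℝ≥0∞) ≤ P T + ENNReal.ofReal δ := by
    have h0 : P (Set.univ : Set (Fin n → Z)) = 1 := measure_univ
    calc (1 : ℝ≥0∞) = P Set.univ := h0.symm
      _ ≤ P (T ∪ (BadM ∪ BadF)) := measure_mono hsub_univ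
      _ ≤ P T + P (BadM ∪ BadF) := measure_union_le _ _
      _ ≤ P T + ENNReal.ofReal δ := add_le_add le_rfl hBadTot
  have hge : ENNReal.ofReal (1 - δ) ≤ P T := by
    have : ENNReal.ofReal (1 - δ) + ENNReal.ofReal δ = 1 := by
      rw [← ENNReal.ofReal_add (by linarith) (by linarith)]
      norm_num
    have h2 : ENNReal.ofReal (1 - δ) + ENNReal.ofReal δ ≤ P T + ENNReal.ofReal δ := by
      rw [this]
      exact h1le
    exact ENNReal.add_le_add_iff_right ENNReal.ofReal_ne_top |>.1 h2
  have hfinal := ENNReal.toReal_mono (measure_ne_top P T) hge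
  rw [ENNReal.toReal_ofReal (by linarith)] at hfinal
  exact hfinal
end

section
/- Let q, q̃ : Z → {0,1} with P(q(z) = q̃(z)) ≥ η and E_D[q] ≥ E_D[q̃], evaluated on an i.i.d. test set of size n. Then for any ε > 0, P(Ê_S[q̃] − E_D[q̃] + ε/2 ≤ Ê_S[q] − E_D[q]) ≤ exp(−(nε/4)·log(1 + ε/(4(1−η)))). -/
open MeasureTheory

/-- Deviation bound for a pair of similar queries: if `P(q = q̃) ≥ η` and
`E_D[q] ≥ E_D[q̃]`, then on an i.i.d. test set of size `n`,
`P(Ê[q̃] - E[q̃] + ε/2 ≤ Ê[q] - E[q]) ≤ exp(-(nε/4)·log(1 + ε/(4(1-η))))`. -/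
theorem stmt_18 {Z : Type*} [MeasurableSpace Z] (D : Measure Z) [IsProbabilityMeasure D]
    (n : ℕ) (hn : 0 < n)
    (q qt : Z → ℝ) (hq : Measurable q) (hqt : Measurable qt)
    (hqval : ∀ z, q z = 0 ∨ q z = 1) (hqtval : ∀ z, qt z = 0 ∨ qt z = 1)
    (η ε : ℝ) (hη0 : 0 ≤ η) (hη1 : η < 1) (hε : 0 < ε)
    (hsim : η ≤ (D {z | q z = qt z}).toReal)
    (hmean : (∫ z, qt z ∂D) ≤ ∫ z, q z ∂D) :
    ((Measure.pi fun _ : Fin n => D)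
      {ω | (1 / n : ℝ) * ∑ j, qt (ω j) - (∫ z, qt z ∂D) + ε / 2 ≤
        (1 / n : ℝ) * ∑ j, q (ω j) - ∫ z, q z ∂D}).toReal ≤
      Real.exp (-(n * ε / 4) * Real.log (1 + ε / (4 * (1 - η)))) := by
  classical
  set X : Z → ℝ := fun z => q z - qt z with hXdef
  have hXmeas : Measurable X := hq.sub hqt
  have hXval : ∀ z, X z = -1 ∨ X z = 0 ∨ X z = 1 := by
    intro z
    rcases hqval z with h1 | h1 <;> rcases hqtval z with h2 | h2 <;>
      simp [hXdef, h1, h2]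
  have h1η : (0:ℝ) < 1 - η := by linarith
  set t : ℝ := ε / (4 * (1 - η)) with htdef
  have ht : 0 < t := by positivity
  have h1t : (0:ℝ) < 1 + t := by linarith
  set L : ℝ := Real.log (1 + t) with hLdef
  have hL0 : 0 < L := Real.log_pos (by linarith)
  set d : ℝ := t / (1 + t) with hddef
  have hexpL : Real.exp L = 1 + t := Real.exp_log h1t
  -- sets where X = 1 and X = -1
  set A : Set Z := {z | X z = 1} with hAdef
  set B : Set Z := {z | X z = -1} with hBdef
  have hA : MeasurableSet A := hXmeas (measurableSet_singleton 1)
  have hB : MeasurableSet B := hXmeas (measurableSet_singleton (-1))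
  set p : ℝ := (D A).toReal with hpdef
  set r : ℝ := (D B).toReal with hrdef
  have hp0 : 0 ≤ p := ENNReal.toReal_nonneg
  have hr0 : 0 ≤ r := ENNReal.toReal_nonneg
  -- p ≤ 1 - η and r ≤ 1 - η
  have hzero : {z | X z = 0} = {z | q z = qt z} := by
    ext z; simp [hXdef, sub_eq_zero]
  have hZmeas : MeasurableSet {z | X z = 0} := hXmeas (measurableSet_singleton 0)
  have hpr : p + r ≤ 1 - η := by
    have hdisj : Disjoint A B := by
      rw [Set.disjoint_left]
      intro z hzA hzB
      have h1 : X z = 1 := hzA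
      have h2 : X z = -1 := hzB
      linarith
    have hsub : A ∪ B ⊆ {z | X z = 0}ᶜ := by
      intro z hz
      rcases hz with hz | hz <;> simp only [Set.mem_compl_iff, Set.mem_setOf_eq] at *
      · rw [hz]; norm_num
      · rw [hz]; norm_num
    have h1 : D (A ∪ B) ≤ D ({z | X z = 0}ᶜ) := measure_mono hsub
    have h2 : D ({z | X z = 0}ᶜ) = 1 - D {z | X z = 0} :=
      prob_compl_eq_one_sub hZmeas
    have h3 : D (A ∪ B) = D A + D B := measure_union hdisj hB
    have hfin : D {z | X z = 0} ≠ ⊤ := measure_ne_top _ _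
    have hle1 : D {z | X z = 0} ≤ 1 := prob_le_one
    have h4 : (D (A ∪ B)).toReal = p + r := by
      rw [h3, ENNReal.toReal_add (measure_ne_top _ _) (measure_ne_top _ _)]
    have h5 : (D ({z | X z = 0}ᶜ)).toReal = 1 - (D {z | X z = 0}).toReal := by
      rw [h2, ENNReal.toReal_sub_of_le hle1 ENNReal.one_ne_top]
      simp
    have h6 : (D (A ∪ B)).toReal ≤ (D ({z | X z = 0}ᶜ)).toReal :=
      ENNReal.toReal_mono (measure_ne_top _ _) h1
    have h7 : η ≤ (D {z | X z = 0}).toReal := by rw [hzero]; exact hsim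
    rw [h4, h5] at * ; linarith
  have hpη : p ≤ 1 - η := by linarith
  have hrη : r ≤ 1 - η := by linarith
  -- pointwise identities
  have hXind : ∀ z, X z = A.indicator 1 z - B.indicator 1 z := by
    intro z
    rcases hXval z with h | h | h
    · have hzB : z ∈ B := h
      have hzA : z ∉ A := by
        simp only [hAdef, Set.mem_setOf_eq, h]; norm_num
      simp [Set.indicator_of_mem hzB, Set.indicator_of_notMem hzA, h]
    · have hzA : z ∉ A := by simp only [hAdef, Set.mem_setOf_eq, h]; norm_num
      have hzB : z ∉ B := by simp only [hBdef, Set.mem_setOf_eq, h]; norm_num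
      simp [Set.indicator_of_notMem hzA, Set.indicator_of_notMem hzB, h]
    · have hzA : z ∈ A := h
      have hzB : z ∉ B := by simp only [hBdef, Set.mem_setOf_eq, h]; norm_num
      simp [Set.indicator_of_mem hzA, Set.indicator_of_notMem hzB, h]
  have hexpX : ∀ z, Real.exp (L * X z) =
      1 + t * A.indicator 1 z - d * B.indicator 1 z := by
    intro z
    rcases hXval z with h | h | h
    · have hzB : z ∈ B := h
      have hzA : z ∉ A := by simp only [hAdef, Set.mem_setOf_eq, h]; norm_num
      rw [h]
      rw [Set.indicator_of_mem hzB, Set.indicator_of_notMem hzA]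
      have : Real.exp (L * (-1)) = (1 + t)⁻¹ := by
        rw [mul_neg_one, Real.exp_neg, hexpL]
      rw [this, hddef]
      field_simp
      simp only [Pi.one_apply, mul_zero, add_zero, mul_one]; ring
    · have hzA : z ∉ A := by simp only [hAdef, Set.mem_setOf_eq, h]; norm_num
      have hzB : z ∉ B := by simp only [hBdef, Set.mem_setOf_eq, h]; norm_num
      rw [h]
      simp [Set.indicator_of_notMem hzA, Set.indicator_of_notMem hzB]
    · have hzA : z ∈ A := h
      have hzB : z ∉ B := by simp only [hBdef, Set.mem_setOf_eq, h]; norm_num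
      rw [h, Set.indicator_of_mem hzA, Set.indicator_of_notMem hzB]
      simp [hexpL]
  -- integrability of indicators
  have hintA : Integrable (A.indicator (1 : Z → ℝ)) D :=
    (integrable_const (1:ℝ)).indicator hA
  have hintB : Integrable (B.indicator (1 : Z → ℝ)) D :=
    (integrable_const (1:ℝ)).indicator hB
  -- mean of X
  have hqint : Integrable q D := by
    refine (integrable_const (1:ℝ)).mono' hq.aestronglyMeasurable ?_
    filter_upwards with z
    rcases hqval z with h | h <;> simp [h]
  have hqtint : Integrable qt D := by
    refine (integrable_const (1:ℝ)).mono' hqt.aestronglyMeasurable ?_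
    filter_upwards with z
    rcases hqtval z with h | h <;> simp [h]
  set μX : ℝ := (∫ z, q z ∂D) - ∫ z, qt z ∂D with hμXdef
  have hXint' : Integrable X D := hqint.sub hqtint
  have hμX : ∫ z, X z ∂D = μX := integral_sub hqint hqtint
  have hμXpr : μX = p - r := by
    rw [← hμX]
    have : ∫ z, X z ∂D = ∫ z, (A.indicator 1 z - B.indicator 1 z) ∂D :=
      integral_congr_ae (Filter.Eventually.of_forall hXind)
    rw [this, integral_sub hintA hintB, integral_indicator_one hA,
      integral_indicator_one hB]
    rfl
  -- the moment generating function
  have hmgf : ∫ z, Real.exp (L * X z) ∂D = 1 + t * p - d * r := by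
    have : ∫ z, Real.exp (L * X z) ∂D =
        ∫ z, (1 + t * A.indicator 1 z - d * B.indicator 1 z) ∂D :=
      integral_congr_ae (Filter.Eventually.of_forall hexpX)
    have i1 : Integrable (fun z => (1:ℝ) + t * A.indicator 1 z) D :=
      (integrable_const 1).add (hintA.const_mul t)
    have i2 : Integrable (fun z => d * B.indicator 1 z) D := hintB.const_mul d
    rw [this, integral_sub i1 i2, integral_add (integrable_const 1) (hintA.const_mul t),
      integral_const, integral_const_mul, integral_const_mul,
      integral_indicator_one hA, integral_indicator_one hB]
    simp
    rfl
  -- key real inequality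
  have hLt : L ≤ t := by
    have := Real.log_le_sub_one_of_pos h1t
    rw [← hLdef] at this; linarith
  have hdL : d ≤ L := by
    have h := Real.log_le_sub_one_of_pos (inv_pos.2 h1t)
    rw [Real.log_inv, ← hLdef] at h
    have h2 : 1 - (1 + t)⁻¹ = d := by rw [hddef]; field_simp; ring
    linarith
  have hkey : ∫ z, Real.exp (L * X z) ∂D ≤ Real.exp (L * μX + L * (ε / 4)) := by
    rw [hmgf]
    have h1 : 1 + t * p - d * r ≤ Real.exp (t * p - d * r) := by
      have := Real.add_one_le_exp (t * p - d * r)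
      linarith
    refine h1.trans (Real.exp_le_exp.2 ?_)
    rw [hμXpr]
    have e1 : p * (t - L) ≤ (1 - η) * (t - L) :=
      mul_le_mul_of_nonneg_right hpη (by linarith)
    have e2 : r * (L - d) ≤ (1 - η) * (L - d) :=
      mul_le_mul_of_nonneg_right hrη (by linarith)
    have e3 : (1 - η) * (t - d) = (ε / 4) * d := by
      rw [hddef, htdef]; field_simp; ring
    have e4 : (ε / 4) * d ≤ (ε / 4) * L :=
      mul_le_mul_of_nonneg_left hdL (by positivity)
    nlinarith
  -- the sum functional
  set g : (Fin n → Z) → ℝ := fun ω => ∑ j, X (ω j) with hgdef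
  have hgmeas : Measurable g :=
    Finset.measurable_sum _ fun j _ => hXmeas.comp (measurable_pi_apply j)
  set s : ℝ := n * μX + n * (ε / 2) with hsdef
  have hn' : (0:ℝ) < n := by exact_mod_cast hn
  -- event rewriting
  have hEvent : {ω : Fin n → Z | (1 / n : ℝ) * ∑ j, qt (ω j) - (∫ z, qt z ∂D) + ε / 2 ≤
        (1 / n : ℝ) * ∑ j, q (ω j) - ∫ z, q z ∂D} =
      {ω | Real.exp (L * s) ≤ Real.exp (L * g ω)} := by
    ext ω
    simp only [Set.mem_setOf_eq, Real.exp_le_exp]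
    rw [mul_le_mul_iff_right₀ hL0]
    have hg' : g ω = (∑ j, q (ω j)) - ∑ j, qt (ω j) := by
      rw [hgdef]; simp [hXdef, Finset.sum_sub_distrib]
    set Sq := ∑ j, q (ω j) with hSq
    set Sqt := ∑ j, qt (ω j) with hSqt
    have ering : (Sq - Sqt) / n = 1 / n * Sq - 1 / n * Sqt := by ring
    constructor <;> intro h
    · rw [hsdef, hμXdef, hg']
      have key : (∫ z, q z ∂D) - (∫ z, qt z ∂D) + ε / 2 ≤ (Sq - Sqt) / n := by
        rw [ering]; linarith
      calc (n:ℝ) * ((∫ z, q z ∂D) - ∫ z, qt z ∂D) + n * (ε / 2)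
          = n * (((∫ z, q z ∂D) - ∫ z, qt z ∂D) + ε / 2) := by ring
        _ ≤ n * ((Sq - Sqt) / n) := mul_le_mul_of_nonneg_left key hn'.le
        _ = Sq - Sqt := by field_simp
    · rw [hsdef, hμXdef, hg'] at h
      have key : ((∫ z, q z ∂D) - ∫ z, qt z ∂D) + ε / 2 ≤ (Sq - Sqt) / n := by
        rw [le_div_iff₀ hn']
        calc (((∫ z, q z ∂D) - ∫ z, qt z ∂D) + ε / 2) * n
            = (n:ℝ) * ((∫ z, q z ∂D) - ∫ z, qt z ∂D) + n * (ε / 2) := by ring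
          _ ≤ Sq - Sqt := h
      rw [ering] at key
      linarith
  rw [hEvent]
  -- Markov's inequality
  have hfmeas : Measurable fun ω : Fin n → Z => Real.exp (L * g ω) :=
    Real.measurable_exp.comp (measurable_const.mul hgmeas)
  have hXabs : ∀ z, |X z| ≤ 1 := by
    intro z; rcases hXval z with h | h | h <;> rw [h] <;> norm_num
  have hgabs : ∀ ω, |g ω| ≤ n := by
    intro ω
    calc |g ω| ≤ ∑ j : Fin n, |X (ω j)| := Finset.abs_sum_le_sum_abs _ _
    _ ≤ ∑ _j : Fin n, (1:ℝ) := Finset.sum_le_sum fun j _ => hXabs _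
    _ = n := by simp
  have hbound : ∀ ω : Fin n → Z, ‖Real.exp (L * g ω)‖ ≤ Real.exp (L * n) := by
    intro ω
    rw [Real.norm_eq_abs, Real.abs_exp]
    apply Real.exp_le_exp.2
    have := (abs_le.1 (hgabs ω)).2
    nlinarith
  have hint : Integrable (fun ω : Fin n → Z => Real.exp (L * g ω))
      (Measure.pi fun _ : Fin n => D) :=
    (integrable_const _).mono' hfmeas.aestronglyMeasurable
      (Filter.Eventually.of_forall hbound)
  have hmarkov := mul_meas_ge_le_integral_of_nonneg
    (Filter.Eventually.of_forall fun ω => (Real.exp_pos (L * g ω)).le) hint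
    (Real.exp (L * s))
  -- compute the integral over the product
  have hprod : ∫ ω, Real.exp (L * g ω) ∂(Measure.pi fun _ : Fin n => D) =
      (∫ z, Real.exp (L * X z) ∂D) ^ n := by
    letI : MeasureSpace Z := ⟨D⟩
    haveI : SigmaFinite (volume : Measure Z) := inferInstanceAs (SigmaFinite D)
    have h1 : ∀ ω : Fin n → Z, Real.exp (L * g ω) =
        ∏ j : Fin n, Real.exp (L * X (ω j)) := by
      intro ω
      rw [hgdef, Finset.mul_sum, Real.exp_sum]
    calc ∫ ω, Real.exp (L * g ω) ∂(Measure.pi fun _ : Fin n => D)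
        = ∫ ω : Fin n → Z, ∏ j, Real.exp (L * X (ω j)) := by
          rw [MeasureTheory.volume_pi]
          exact integral_congr_ae (Filter.Eventually.of_forall h1)
      _ = (∫ z, Real.exp (L * X z)) ^ Fintype.card (Fin n) :=
          MeasureTheory.integral_fintype_prod_eq_pow fun z => Real.exp (L * X z)
      _ = (∫ z, Real.exp (L * X z) ∂D) ^ n := by rw [Fintype.card_fin]; rfl
  rw [hprod] at hmarkov
  -- conclude
  have hMnonneg : 0 ≤ ∫ z, Real.exp (L * X z) ∂D :=
    integral_nonneg fun z => (Real.exp_pos _).le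
  have hpow : (∫ z, Real.exp (L * X z) ∂D) ^ n ≤
      Real.exp (L * μX + L * (ε / 4)) ^ n :=
    pow_le_pow_left₀ hMnonneg hkey n
  have hfinal : ((Measure.pi fun _ : Fin n => D)
      {ω | Real.exp (L * s) ≤ Real.exp (L * g ω)}).toReal ≤
      Real.exp (L * μX + L * (ε / 4)) ^ n / Real.exp (L * s) := by
    rw [le_div_iff₀ (Real.exp_pos _)]
    calc ((Measure.pi fun _ : Fin n => D)
        {ω | Real.exp (L * s) ≤ Real.exp (L * g ω)}).toReal * Real.exp (L * s)
        = Real.exp (L * s) * ((Measure.pi fun _ : Fin n => D)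
          {ω | Real.exp (L * s) ≤ Real.exp (L * g ω)}).toReal := mul_comm _ _
      _ ≤ (∫ z, Real.exp (L * X z) ∂D) ^ n := hmarkov
      _ ≤ Real.exp (L * μX + L * (ε / 4)) ^ n := hpow
  refine hfinal.trans (le_of_eq ?_)
  rw [← Real.exp_nat_mul, ← Real.exp_sub]
  congr 1
  rw [hsdef]
  ring
end
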